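/- arXiv:1601.03546 — 15 statements merged into one kernel-verified Lean document; each statement's English description precedes it below -/
import Mathlib

section
/- Let A be a unital C*-algebra and a ∈ A. Then a is generalized invertible (there exists b with aba = a) if and only if a is Moore-Penrose invertible (there exists b with aba = a, bab = b, and ab, ba self-adjoint). -/
/-- In a unital C*-algebra, an element is generalized invertible iff it is
Moore-Penrose invertible. -/
theorem generalized_inv_iff_moore_penrose_inv {A : Type*} [CStarAlgebra A] (a : A) :
    (∃ b : A, a * b * a = a) ↔
      (∃ b : A, a * b * a = a ∧ b * a * b = b ∧
        star (a * b) = a * b ∧ star (b * a) = b * a) := by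
  constructor
  · rintro ⟨b, hb⟩
    letI : PartialOrder A := CStarAlgebra.spectralOrder A
    haveI : StarOrderedRing A := CStarAlgebra.spectralOrderedRing A
    -- helper: nonneg scalar smul preserves nonneg / order
    have smul_nn : ∀ (c : ℝ), 0 ≤ c → ∀ x : A, 0 ≤ x → 0 ≤ c • x := by
      intro c hc x hx
      have h := star_left_conjugate_nonneg (a := x) (c := algebraMap ℝ A (Real.sqrt c)) hx
      have hsa : star (algebraMap ℝ A (Real.sqrt c)) = algebraMap ℝ A (Real.sqrt c) := by
        simp [Algebra.algebraMap_eq_smul_one, star_smul]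
      rw [hsa] at h
      have heq : algebraMap ℝ A (Real.sqrt c) * x * algebraMap ℝ A (Real.sqrt c) = c • x := by
        simp only [Algebra.algebraMap_eq_smul_one]
        rw [smul_mul_assoc, one_mul, mul_smul_comm, mul_one, smul_smul,
          Real.mul_self_sqrt hc]
      rwa [heq] at h
    have hb' : a * (b * a) = a := by rw [← mul_assoc]; exact hb
    set e : A := star (b * a) with he_def
    have hq : (b * a) * (b * a) = b * a := by
      rw [mul_assoc b a (b * a), hb']
    have he : e * e = e := by
      rw [he_def, ← star_mul, hq]
    have he' : star e * star e = star e := by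
      rw [he_def, star_star, hq]
    set k : A := e * star e - e - star e + star e * e with hk_def
    set z : A := 1 + k with hz_def
    have hky : (e - star e) * (star e - e) = k := by
      have h1 : (e - star e) * (star e - e)
          = e * star e - e * e - star e * star e + star e * e := by noncomm_ring
      rw [h1, he, he', hk_def]
    have hz_sa : star z = z := by
      rw [hz_def, hk_def]
      simp only [star_add, star_sub, star_one, star_mul, star_star]
      noncomm_ring
    have hk_nn : (0 : A) ≤ k := by
      rw [← hky]
      have h := star_mul_self_nonneg (star e - e)
      rwa [star_sub, star_star] at h
    have hz_unit : IsUnit z := by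
      refine CStarAlgebra.isUnit_of_le 1 ?_ ⟨zero_le_one, isUnit_one⟩
      rw [hz_def]
      exact le_add_of_nonneg_right hk_nn
    obtain ⟨zu, hzu⟩ := hz_unit
    -- commutation of z with e and star e
    have hez : e * z = z * e := by
      have h1 : e * z = e * e * star e - e * e - e * star e + e * (star e * e) + e := by
        rw [hz_def, hk_def]; noncomm_ring
      have h2 : z * e = e * star e * e - e * e - star e * e + star e * (e * e) + e := by
        rw [hz_def, hk_def]; noncomm_ring
      rw [he] at h1 h2
      rw [h1, h2]; noncomm_ring
    have hze' : z * star e = star e * e * star e := by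
      have h1 : z * star e = e * (star e * star e) - e * star e
          - star e * star e + star e * (e * star e) + star e := by
        rw [hz_def, hk_def]; noncomm_ring
      rw [he'] at h1
      rw [h1]; noncomm_ring
    have hcomm_e : Commute e (↑zu⁻¹ : A) := by
      have hc : Commute e (↑zu : A) := by rw [Commute, SemiconjBy, hzu]; exact hez
      exact hc.units_inv_right
    have hcomm_se : Commute (star e) (↑zu⁻¹ : A) := by
      have hc : Commute (star e) (↑zu : A) := by
        rw [Commute, SemiconjBy, hzu]
        have h := congrArg star hez
        simpa only [star_mul, star_star, hz_sa] using h.symm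
      exact hc.units_inv_right
    set zi : A := (↑zu⁻¹ : A) with hzi_def
    have hzzi : z * zi = 1 := by rw [hzi_def, ← hzu]; exact zu.mul_inv
    have hzi_sa : star zi = zi := by
      have h1 : star zi * z = 1 := by
        rw [← hz_sa, ← star_mul, hzzi, star_one]
      calc star zi = star zi * (z * zi) := by rw [hzzi, mul_one]
        _ = (star zi * z) * zi := by rw [mul_assoc]
        _ = zi := by rw [h1, one_mul]
    have mv1 : ∀ x : A, zi * (e * x) = e * (zi * x) := fun x => by
      rw [← mul_assoc, ← hcomm_e.eq, mul_assoc]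
    have mv2 : ∀ x : A, zi * (star e * x) = star e * (zi * x) := fun x => by
      rw [← mul_assoc, ← hcomm_se.eq, mul_assoc]
    have hsez : star e * z = z * star e := by
      have h := congrArg star hez
      simpa only [star_mul, star_star, hz_sa] using h.symm
    have mvz2 : ∀ x : A, z * (star e * x) = star e * (z * x) := fun x => by
      rw [← mul_assoc, ← hsez, mul_assoc]
    have red : ∀ x : A, star e * (e * (star e * x)) = z * (star e * x) := fun x => by
      rw [← mul_assoc, ← mul_assoc, ← hze', mul_assoc]
    have zz : ∀ x : A, z * (zi * x) = x := fun x => by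
      rw [← mul_assoc, hzzi, one_mul]
    set s : A := e * star e * zi with hs_def
    have hs_sa : star s = s := by
      rw [hs_def, star_mul, star_mul, star_star, hzi_sa]
      calc zi * (e * star e) = (zi * e) * star e := by rw [mul_assoc]
        _ = (e * zi) * star e := by rw [hcomm_e.symm.eq]
        _ = e * (zi * star e) := by rw [mul_assoc]
        _ = e * (star e * zi) := by rw [hcomm_se.symm.eq]
        _ = e * star e * zi := by rw [mul_assoc]
    have hqs : star e * s = star e := by
      rw [hs_def]
      simp only [mul_assoc]
      rw [red, mvz2, hzzi, mul_one]
    have hss : s * s = s := by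
      rw [hs_def]
      simp only [mul_assoc]
      rw [mv1, mv2, red, mvz2, zz]
    have haq : a * star e = a := by
      rw [he_def, star_star, hb']
    have has : a * s = a := by
      calc a * s = (a * star e) * s := by rw [haq]
        _ = a * (star e * s) := by rw [mul_assoc]
        _ = a * star e := by rw [hqs]
        _ = a := haq
    have hsa' : s * star a = star a := by
      have h := congrArg star has
      rwa [star_mul, hs_sa] at h
    -- s = t * a
    set t : A := zi * (e * b) with ht_def
    have hta : t * a = s := by
      calc t * a = zi * (e * (b * a)) := by rw [ht_def, mul_assoc, mul_assoc]
        _ = zi * (e * star e) := by rw [he_def, star_star]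
        _ = (zi * e) * star e := by rw [mul_assoc]
        _ = (e * zi) * star e := by rw [hcomm_e.symm.eq]
        _ = e * (zi * star e) := by rw [mul_assoc]
        _ = e * (star e * zi) := by rw [hcomm_se.symm.eq]
        _ = s := by rw [hs_def, mul_assoc]
    -- bound : s ≤ K • (star a * a)
    set K : ℝ := ‖t‖ ^ 2 + 1 with hK_def
    have hK0 : (0 : ℝ) < K := by positivity
    have hs_le : s ≤ K • (star a * a) := by
      have h0 : star t * t ≤ algebraMap ℝ A (‖t‖ ^ 2) :=
        CStarAlgebra.star_mul_le_algebraMap_norm_sq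
      have h1 := star_left_conjugate_le_conjugate h0 a
      have h2 : star a * (star t * t) * a = s := by
        calc star a * (star t * t) * a = (star a * star t) * (t * a) := by noncomm_ring
          _ = star (t * a) * (t * a) := by rw [star_mul t a]
          _ = star s * s := by rw [hta]
          _ = s := by rw [hs_sa, hss]
      have h3 : star a * algebraMap ℝ A (‖t‖ ^ 2) * a = (‖t‖ ^ 2) • (star a * a) := by
        simp only [Algebra.algebraMap_eq_smul_one]
        rw [mul_smul_comm, mul_one, smul_mul_assoc]
      rw [h2, h3] at h1
      refine h1.trans ?_
      have h4 : K • (star a * a) = (‖t‖ ^ 2) • (star a * a) + 1 • (star a * a) := by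
        rw [hK_def]; module
      rw [h4, one_smul]
      exact le_add_of_nonneg_right (star_mul_self_nonneg a)
    have h1ms : (0 : A) ≤ 1 - s := by
      have h5 : (1 : A) - s = star (1 - s) * (1 - s) := by
        rw [star_sub, star_one, hs_sa]
        calc (1 : A) - s = 1 - s - s + s := by noncomm_ring
          _ = (1 - s) * (1 - s) := by
            rw [sub_mul, one_mul, mul_sub, mul_one, hss]; noncomm_ring
      rw [h5]
      exact star_mul_self_nonneg _
    set d : A := star a * a + 1 - s with hd_def
    have hd_unit : IsUnit d := by
      refine (fun (h0 : 0 ≤ algebraMap ℝ A K⁻¹) (hle : algebraMap ℝ A K⁻¹ ≤ d) =>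
        CStarAlgebra.isUnit_of_le (algebraMap ℝ A K⁻¹) hle
        ⟨h0, IsUnit.map (algebraMap ℝ A) (isUnit_iff_ne_zero.mpr (by positivity))⟩) ?_ ?_
      · have h := smul_nn K⁻¹ (by positivity) 1 zero_le_one
        rwa [Algebra.algebraMap_eq_smul_one]
      · have hexp2 : K • (d - K⁻¹ • 1) = (K • (star a * a) - s) + (K - 1) • (1 - s) := by
          rw [hd_def, smul_sub, smul_smul, mul_inv_cancel₀ (ne_of_gt hK0), one_smul]
          module
        have key : (0 : A) ≤ d - K⁻¹ • 1 := by
          have h6 : d - K⁻¹ • 1 = K⁻¹ • (K • (d - K⁻¹ • 1)) := by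
            rw [smul_smul, inv_mul_cancel₀ (ne_of_gt hK0), one_smul]
          rw [h6, hexp2]
          refine smul_nn _ (by positivity) _ (add_nonneg ?_ ?_)
          · rwa [sub_nonneg]
          · refine smul_nn _ ?_ _ h1ms
            rw [hK_def]
            simp only [add_sub_cancel_right]
            positivity
        have h := sub_nonneg.mp key
        rwa [Algebra.algebraMap_eq_smul_one]
    obtain ⟨du, hdu⟩ := hd_unit
    set D : A := (↑du⁻¹ : A) with hD_def
    have hdD : d * D = 1 := by rw [hD_def, ← hdu]; exact du.mul_inv
    have hDd : D * d = 1 := by rw [hD_def, ← hdu]; exact du.inv_mul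
    have hd_sa : star d = d := by
      rw [hd_def, star_sub, star_add, star_mul, star_star, star_one, hs_sa]
    have hD_sa : star D = D := by
      have h1 : star D * d = 1 := by
        rw [← hd_sa, ← star_mul, hdD, star_one]
      calc star D = star D * (d * D) := by rw [hdD, mul_one]
        _ = (star D * d) * D := by rw [mul_assoc]
        _ = D := by rw [h1, one_mul]
    have hds : d * s = star a * a := by
      calc d * s = star a * (a * s) + s - s * s := by rw [hd_def]; noncomm_ring
        _ = star a * a := by rw [has, hss]; noncomm_ring
    have hsd : s * d = star a * a := by
      calc s * d = (s * star a) * a + s - s * s := by rw [hd_def]; noncomm_ring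
        _ = star a * a := by rw [hsa', hss]; noncomm_ring
    have hcomm_sd : Commute s (D : A) := by
      have hc : Commute s d := by rw [Commute, SemiconjBy, hsd, hds]
      have hc2 : Commute s (↑du : A) := by rwa [hdu]
      exact hc2.units_inv_right
    have hma : (D * star a) * a = s := by
      calc (D * star a) * a = D * (star a * a) := by rw [mul_assoc]
        _ = D * (d * s) := by rw [hds]
        _ = (D * d) * s := by rw [mul_assoc]
        _ = s := by rw [hDd, one_mul]
    refine ⟨D * star a, ?_, ?_, ?_, ?_⟩
    · calc a * (D * star a) * a = a * ((D * star a) * a) := by rw [mul_assoc]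
        _ = a * s := by rw [hma]
        _ = a := has
    · calc (D * star a) * a * (D * star a) = s * (D * star a) := by rw [hma]
        _ = (s * D) * star a := by rw [← mul_assoc]
        _ = (D * s) * star a := by rw [hcomm_sd.eq]
        _ = D * (s * star a) := by rw [mul_assoc D s (star a)]
        _ = D * star a := by rw [hsa']
    · rw [star_mul, star_mul, star_star, hD_sa, mul_assoc]
    · rw [hma, hs_sa]
  · rintro ⟨c, h1, -, -, -⟩
    exact ⟨c, h1⟩
end

section
/- Let A be a unital C*-algebra and a ∈ A. Then a is Moore-Penrose invertible if and only if a*a is invertible or 0 is an isolated point of the spectrum of a*a. -/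
open Filter Topology

lemma mp_aux_contOn {S : Set ℂ} (hS : ¬ AccPt 0 (𝓟 S)) {h : ℂ → ℂ}
    (hh : ∀ z : ℂ, z ≠ 0 → ContinuousAt h z) :
    ContinuousOn (fun z => if z = 0 then 0 else h z) S := by
  intro z hz
  by_cases hz0 : z = 0
  · subst hz0
    have hbot : 𝓝[S \ {0}] (0:ℂ) = ⊥ := by
      rw [AccPt, not_neBot] at hS
      rw [← hS, nhdsWithin, nhdsWithin, Set.diff_eq, Set.inter_comm, ← Filter.inf_principal,
        ← inf_assoc, inf_right_comm, inf_assoc]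
    have hle : 𝓝[S] (0:ℂ) ≤ pure 0 := by
      calc 𝓝[S] (0:ℂ) ≤ 𝓝[(S \ {0}) ∪ {0}] 0 :=
            nhdsWithin_mono _ (by intro w hw; by_cases hw0 : w = 0 <;> simp [hw0, hw])
        _ = 𝓝[S \ {0}] 0 ⊔ 𝓝[{0}] 0 := nhdsWithin_union _ _ _
        _ = pure 0 := by rw [hbot, nhdsWithin_singleton, bot_sup_eq]
    have : Filter.Tendsto (fun z => if z = 0 then (0:ℂ) else h z) (pure 0) (𝓝 0) := by
      simpa using tendsto_pure_nhds (fun z => if z = 0 then (0:ℂ) else h z) 0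
    rw [ContinuousWithinAt]
    simpa using this.mono_left hle
  · apply ContinuousAt.continuousWithinAt
    have hev : ∀ᶠ w in 𝓝 z, h w = (if w = 0 then 0 else h w) := by
      filter_upwards [isOpen_compl_singleton.mem_nhds hz0] with w hw
      simp only [Set.mem_compl_iff, Set.mem_singleton_iff] at hw
      simp [hw]
    exact (hh z hz0).congr hev

/-- The reverse implication: if `0` is not an accumulation point of the spectrum of
`star a * a`, then `a` is Moore–Penrose invertible. -/
lemma mp_of_not_accPt {A : Type*} [CStarAlgebra A] (a : A)
    (hacc : ¬ AccPt (0 : ℂ) (Filter.principal (spectrum ℂ (star a * a)))) :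
    ∃ b : A, a * b * a = a ∧ b * a * b = b ∧
        star (a * b) = a * b ∧ star (b * a) = b * a := by
  set x := star a * a with hxdef
  have hxsa : IsSelfAdjoint x := IsSelfAdjoint.star_mul_self a
  have hxn : IsStarNormal x := hxsa.isStarNormal
  set f : ℂ → ℂ := fun z => if z = 0 then 0 else z⁻¹ with hfdef
  set g : ℂ → ℂ := fun z => if z = 0 then 0 else 1 with hgdef
  have hf : ContinuousOn f (spectrum ℂ x) :=
    mp_aux_contOn hacc (fun z hz => continuousAt_inv₀ hz)
  have hg : ContinuousOn g (spectrum ℂ x) :=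
    mp_aux_contOn hacc (fun z _ => continuousAt_const)
  have hreal : ∀ z ∈ spectrum ℂ x, star z = z := by
    intro z hz
    have := hxsa.mem_spectrum_eq_re hz
    rw [this]
    exact Complex.conj_ofReal _
  set y := cfc f x with hydef
  set p := cfc g x with hpdef
  have hyx : y * x = p := by
    have key := cfc_mul f id x hf continuousOn_id
    rw [cfc_id ℂ x] at key
    rw [hydef, hpdef, ← key]
    apply cfc_congr
    intro z _
    by_cases hz : z = 0 <;> simp [f, g, hz, inv_mul_cancel₀]
  have hpx : p * x = x := by
    have key := cfc_mul g id x hg continuousOn_id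
    rw [cfc_id ℂ x] at key
    rw [hpdef, ← key]
    conv_rhs => rw [← cfc_id ℂ x]
    apply cfc_congr
    intro z _
    by_cases hz : z = 0 <;> simp [g, hz]
  have hpy : p * y = y := by
    rw [hpdef, hydef, ← cfc_mul g f x hg hf]
    apply cfc_congr
    intro z _
    by_cases hz : z = 0 <;> simp [f, g, hz]
  have hps : star p = p := by
    rw [hpdef, ← cfc_star g x]
    apply cfc_congr
    intro z _
    by_cases hz : z = 0 <;> simp [g, hz]
  have hys : star y = y := by
    rw [hydef, ← cfc_star f x]
    apply cfc_congr
    intro z hz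
    by_cases hz0 : z = 0
    · simp [f, hz0]
    · simp only [f, if_neg hz0]
      rw [star_inv₀, hreal z hz]
  have hxy : x * y = p := by
    have := congrArg star hyx
    rwa [star_mul, hys, hxsa.star_eq, hps] at this
  -- a * p = a
  have hone : (1 : A) - p = cfc (fun z => 1 - g z) x := by
    rw [hpdef, cfc_sub _ _ x (continuousOn_const) hg, cfc_const_one ℂ x]
  have hzero : ((1 : A) - p) * x * ((1 : A) - p) = 0 := by
    rw [hone]
    have key := cfc_mul (fun z => (1 - g z) * id z) (fun z => 1 - g z) x
      ((continuousOn_const.sub hg).mul continuousOn_id) (continuousOn_const.sub hg)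
    have key2 := cfc_mul (fun z => 1 - g z) id x (continuousOn_const.sub hg) continuousOn_id
    rw [cfc_id ℂ x] at key2
    rw [← key2, ← key]
    rw [show (0 : A) = cfc (fun _ : ℂ => (0:ℂ)) x by rw [cfc_const 0 x]; simp]
    apply cfc_congr
    intro z _
    by_cases hz : z = 0 <;> simp [g, hz]
  have hap : a * p = a := by
    have h1 : star (a * (1 - p)) * (a * (1 - p)) = 0 := by
      rw [star_mul, star_sub, star_one, hps]
      calc (1 - p) * star a * (a * (1 - p)) = (1 - p) * (star a * a) * (1 - p) := by
            rw [mul_assoc, mul_assoc, mul_assoc]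
        _ = 0 := by rw [← hxdef, hzero]
    have h2 : a * (1 - p) = 0 := by
      rwa [CStarRing.star_mul_self_eq_zero_iff] at h1
    have := h2
    rw [mul_sub, mul_one, sub_eq_zero] at this
    exact this.symm
  refine ⟨y * star a, ?_, ?_, ?_, ?_⟩
  · have h1 : a * (y * star a) * a = a * (y * x) := by
      rw [hxdef]; simp only [mul_assoc]
    rw [h1, hyx, hap]
  · have h1 : y * star a * a * (y * star a) = y * x * (y * star a) := by
      rw [hxdef]; simp only [mul_assoc]
    rw [h1, hyx, ← mul_assoc, hpy]
  · simp only [star_mul, star_star, hys, mul_assoc]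
  · have h2 : y * star a * a = y * x := by rw [hxdef, mul_assoc]
    rw [h2, star_mul, hxsa.star_eq, hys, hxy, ← hyx]

lemma mp_not_accPt {A : Type*} [CStarAlgebra A] (a b : A)
    (hab : a * b * a = a) (hbab : b * a * b = b)
    (habs : star (a * b) = a * b) (hbas : star (b * a) = b * a) :
    ¬ AccPt (0 : ℂ) (Filter.principal (spectrum ℂ (star a * a))) := by
  set x := star a * a with hxdef
  have hxsa : IsSelfAdjoint x := IsSelfAdjoint.star_mul_self a
  set p := b * a with hpdef
  set y := b * star b with hydef
  have hab' : a * (b * a) = a := by rw [← mul_assoc, hab]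
  have hbab' : b * (a * b) = b := by rw [← mul_assoc, hbab]
  have hpp : p * p = p := by
    show b * a * (b * a) = b * a
    rw [← mul_assoc, hbab]
  have hps : star p = p := hbas
  have hxp : x * p = x := by
    show star a * a * (b * a) = star a * a
    rw [mul_assoc, hab']
  have hpx : p * x = x := by
    have := congrArg star hxp
    rwa [star_mul, hps, hxsa.star_eq] at this
  have hys : star y = y := by simp [hydef, star_mul]
  have hb : b = b * star b * star a := by
    have hab2 : star b * star a = a * b := by rw [← star_mul, habs]
    conv_lhs => rw [← hbab', hab2.symm, ← mul_assoc]
  have hyx : y * x = p := by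
    show b * star b * (star a * a) = b * a
    rw [← mul_assoc, ← hb]
  have hxy : x * y = p := by
    have := congrArg star hyx
    rwa [star_mul, hys, hxsa.star_eq, hps] at this
  have hpy : p * y = y := by
    show b * a * (b * star b) = b * star b
    rw [← mul_assoc, mul_assoc b a b, hbab', ]
  have hyp : y * p = y := by
    have := congrArg star hpy
    rwa [star_mul, hys, hps] at this
  -- the unit u = x + (1 - p)
  have huv : (x + (1 - p)) * (y + (1 - p)) = 1 := by
    have expand : (x + (1 - p)) * (y + (1 - p)) =
        x * y + (x - x * p) + (y - p * y) + (1 - p - p + p * p) := by noncomm_ring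
    rw [expand, hxy, hxp, hpy, hpp]
    abel
  have hvu : (y + (1 - p)) * (x + (1 - p)) = 1 := by
    have expand : (y + (1 - p)) * (x + (1 - p)) =
        y * x + (y - y * p) + (x - p * x) + (1 - p - p + p * p) := by noncomm_ring
    rw [expand, hyx, hyp, hpx, hpp]
    abel
  set u : A := x + (1 - p) with hudef
  have hup : u * p = x := by
    have : (x + (1 - p)) * p = x * p + (p - p * p) := by noncomm_ring
    rw [hudef, this, hxp, hpp]; abel
  have hpu : p * u = x := by
    have : p * (x + (1 - p)) = p * x + (p - p * p) := by noncomm_ring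
    rw [hudef, this, hpx, hpp]; abel
  have huu : IsUnit u := ⟨⟨u, y + (1 - p), huv, hvu⟩, rfl⟩
  -- resolvent identity: any nonzero λ outside σ(u) is outside σ(x)
  have key : ∀ l : ℂ, l ≠ 0 → l ∉ spectrum ℂ u → l ∉ spectrum ℂ x := by
    intro l hl hlu
    rw [spectrum.notMem_iff] at hlu ⊢
    set c : A := algebraMap ℂ A l with hcdef
    obtain ⟨w, hw1, hw2⟩ : ∃ w : A, (c - u) * w = 1 ∧ w * (c - u) = 1 :=
      ⟨↑hlu.unit⁻¹, hlu.mul_val_inv, hlu.val_inv_mul⟩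
    have hcp : ∀ d : A, c * d = d * c := fun d => Algebra.commutes l d
    have hcomm : p * (c - u) = (c - u) * p := by
      rw [mul_sub, sub_mul, hpu, hup, hcp p]
    have hpw : p * w = w * p := by
      calc p * w = (w * (c - u)) * (p * w) := by rw [hw2, one_mul]
        _ = w * ((c - u) * p) * w := by simp only [mul_assoc]
        _ = w * (p * (c - u)) * w := by rw [hcomm]
        _ = w * p * ((c - u) * w) := by simp only [mul_assoc]
        _ = w * p := by rw [hw1, mul_one]
    have hxwp : x * (w * p) = u * w * p := by
      rw [← hup]
      calc u * p * (w * p) = u * (p * w) * p := by simp only [mul_assoc]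
        _ = u * (w * p) * p := by rw [hpw]
        _ = u * w * (p * p) := by simp only [mul_assoc]
        _ = u * w * p := by rw [hpp]
    refine ⟨⟨c - x, w * p + l⁻¹ • (1 - p), ?_, ?_⟩, rfl⟩
    · have h1 : (c - x) * (w * p) = p := by
        calc (c - x) * (w * p) = c * w * p - u * w * p := by
              rw [sub_mul, hxwp, ← mul_assoc]
          _ = (c - u) * w * p := by rw [sub_mul, sub_mul]
          _ = p := by rw [hw1, one_mul]
      have h2 : (c - x) * (1 - p) = c * (1 - p) := by
        rw [sub_mul, mul_sub x, mul_one, hxp, sub_self, sub_zero]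
      have h3 : c * (1 - p) = l • (1 - p) := (Algebra.smul_def l (1 - p)).symm
      calc (c - x) * (w * p + l⁻¹ • (1 - p))
          = (c - x) * (w * p) + l⁻¹ • ((c - x) * (1 - p)) := by
            rw [mul_add, mul_smul_comm]
        _ = p + (1 - p) := by rw [h1, h2, h3, smul_smul, inv_mul_cancel₀ hl, one_smul]
        _ = 1 := by abel
    · have h4 : (w * p) * (c - x) = p := by
        have e1 : w * p * c = c * w * p := by
          rw [mul_assoc, ← hcp p, ← mul_assoc, ← hcp w]
        have e2 : w * p * x = w * u * p := by
          rw [mul_assoc, hpx, ← hup, ← mul_assoc]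
        calc w * p * (c - x) = c * w * p - w * u * p := by rw [mul_sub, e1, e2]
          _ = (w * (c - u)) * p := by rw [mul_sub, sub_mul, ← hcp w]
          _ = p := by rw [hw2, one_mul]
      have h5 : (1 - p) * (c - x) = c * (1 - p) := by
        have e3 : (1 - p) * (c - x) = c - x - (p * c - x) := by
          rw [sub_mul, one_mul, mul_sub, hpx]
        rw [e3, ← hcp p, mul_sub, mul_one]
        abel
      have h3 : c * (1 - p) = l • (1 - p) := (Algebra.smul_def l (1 - p)).symm
      calc (w * p + l⁻¹ • (1 - p)) * (c - x)
          = (w * p) * (c - x) + l⁻¹ • ((1 - p) * (c - x)) := by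
            rw [add_mul, smul_mul_assoc]
        _ = p + (1 - p) := by rw [h4, h5, h3, smul_smul, inv_mul_cancel₀ hl, one_smul]
        _ = 1 := by abel
  -- conclude: 0 is not an accumulation point
  intro hA
  have h0u : (0:ℂ) ∉ spectrum ℂ u := spectrum.zero_notMem ℂ huu
  obtain ⟨ε, hε, hball⟩ := Metric.isOpen_iff.mp (spectrum.isClosed (𝕜 := ℂ) u).isOpen_compl 0 h0u
  rw [accPt_iff_nhds] at hA
  obtain ⟨z, ⟨hz1, hz2⟩, hz3⟩ := hA (Metric.ball 0 ε) (Metric.ball_mem_nhds 0 hε)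
  exact key z hz3 (hball hz1) hz2
/-- An element of a unital C*-algebra is Moore-Penrose invertible iff `a*a` is
invertible or `0` is an isolated point of the spectrum of `a*a`. -/
theorem moore_penrose_iff_isolated_zero {A : Type*} [CStarAlgebra A] (a : A) :
    (∃ b : A, a * b * a = a ∧ b * a * b = b ∧
        star (a * b) = a * b ∧ star (b * a) = b * a) ↔
      (IsUnit (star a * a) ∨
        ((0 : ℂ) ∈ spectrum ℂ (star a * a) ∧
          ¬ AccPt (0 : ℂ) (Filter.principal (spectrum ℂ (star a * a))))) := by
  constructor
  · rintro ⟨b, hab, hbab, habs, hbas⟩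
    have hacc := mp_not_accPt a b hab hbab habs hbas
    by_cases h0 : (0:ℂ) ∈ spectrum ℂ (star a * a)
    · exact Or.inr ⟨h0, hacc⟩
    · exact Or.inl ((spectrum.zero_notMem_iff ℂ).mp h0)
  · rintro (hu | ⟨-, hacc⟩)
    · apply mp_of_not_accPt
      intro hA
      have h0 : (0:ℂ) ∈ spectrum ℂ (star a * a) := by
        rw [← (spectrum.isClosed (𝕜 := ℂ) (star a * a)).closure_eq]
        exact mem_closure_iff_clusterPt.mpr (hA.clusterPt)
      exact (spectrum.zero_notMem_iff ℂ).mpr hu h0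
    · exact mp_of_not_accPt a hacc
end

section
/- Let A be a unital C*-algebra and a ∈ A. Then a is Moore-Penrose invertible if and only if there exists a projection q ∈ A (q* = q = q²) such that aq = 0 and a*a + q is invertible. Moreover, in this case q is uniquely determined: q = e − a†a, and a† = (a*a + q)⁻¹ a*. -/
section aux
variable {A : Type*} [CStarAlgebra A] (a b : A)

private lemma mp_e1 (h1 : a * b * a = a) (h3 : star (a * b) = a * b) :
    star a * (a * b) = star a := by
  rw [← h3, ← star_mul, h1]

private lemma mp_e2 (h1 : a * b * a = a) (h4 : star (b * a) = b * a) :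
    b * a * star a = star a := by
  rw [← h4, ← star_mul, ← mul_assoc, h1]

end aux

/-- An element of a unital C*-algebra is Moore-Penrose invertible iff there is a
projection `q` with `a * q = 0` and `star a * a + q` invertible; in that case `q`
is unique, `q = 1 - a† * a` and `a† = (star a * a + q)⁻¹ * star a`. -/
theorem moore_penrose_iff_projection {A : Type*} [CStarAlgebra A] (a : A) :
    ((∃ b : A, a * b * a = a ∧ b * a * b = b ∧
        star (a * b) = a * b ∧ star (b * a) = b * a) ↔
      (∃ q : A, star q = q ∧ q * q = q ∧ a * q = 0 ∧ IsUnit (star a * a + q))) ∧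
    (∀ b : A, (a * b * a = a ∧ b * a * b = b ∧
        star (a * b) = a * b ∧ star (b * a) = b * a) →
      ∀ q : A, star q = q → q * q = q → a * q = 0 → IsUnit (star a * a + q) →
        q = 1 - b * a ∧ b = Ring.inverse (star a * a + q) * star a) := by
  constructor
  · constructor
    · rintro ⟨b, h1, h2, h3, h4⟩
      have e1 := mp_e1 a b h1 h3
      have e2 := mp_e2 a b h1 h4
      have haq : a * (1 - b * a) = 0 := by
        rw [mul_sub, mul_one, ← mul_assoc, h1, sub_self]
      have hqb : (1 - b * a) * b = 0 := by
        rw [sub_mul, one_mul, h2, sub_self]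
      have hqa : (1 - b * a) * star a = 0 := by
        rw [sub_mul, one_mul, e2, sub_self]
      have hsbq : star b * (1 - b * a) = 0 := by
        have : star b * (b * a) = star b := by rw [← h4, ← star_mul, h2]
        rw [mul_sub, mul_one, this, sub_self]
      refine ⟨1 - b * a, ?_, ?_, haq, ?_⟩
      · rw [star_sub, star_one, h4]
      · have hbaba : (b * a) * (b * a) = b * a := by
          rw [← mul_assoc, h2]
        rw [sub_mul, one_mul, mul_sub, mul_one, hbaba]
        abel
      · refine ⟨⟨star a * a + (1 - b * a), b * star b + (1 - b * a), ?_, ?_⟩, rfl⟩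
        · calc (star a * a + (1 - b * a)) * (b * star b + (1 - b * a))
              = (star a * (a * b)) * star b + star a * (a * (1 - b * a))
                + ((1 - b * a) * b) * star b + (1 - b * a) * (1 - b * a) := by
                noncomm_ring
            _ = star a * star b + (1 - b * a) * (1 - b * a) := by
                rw [e1, haq, hqb, mul_zero, zero_mul, add_zero, add_zero]
            _ = b * a + (1 - b * a) * (1 - b * a) := by rw [← star_mul, h4]
            _ = b * a + (1 - b * a) := by
                have hbaba : (b * a) * (b * a) = b * a := by
                  rw [← mul_assoc, h2]
                rw [sub_mul, one_mul, mul_sub, mul_one, hbaba]; abel_nf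
            _ = 1 := by abel
        · calc (b * star b + (1 - b * a)) * (star a * a + (1 - b * a))
              = (b * (star b * star a)) * a + (b * (star b * (1 - b * a)))
                + ((1 - b * a) * star a) * a + (1 - b * a) * (1 - b * a) := by
                noncomm_ring
            _ = (b * (a * b)) * a + (1 - b * a) * (1 - b * a) := by
                rw [← star_mul, h3, hsbq, hqa, mul_zero, zero_mul, add_zero, add_zero]
            _ = b * a + (1 - b * a) * (1 - b * a) := by
                rw [← mul_assoc, h2]
            _ = b * a + (1 - b * a) := by
                have hbaba : (b * a) * (b * a) = b * a := by
                  rw [← mul_assoc, h2]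
                rw [sub_mul, one_mul, mul_sub, mul_one, hbaba]; abel_nf
            _ = 1 := by abel
    · rintro ⟨q, hqs, hq2, haq, hu⟩
      obtain ⟨U, hU⟩ := hu
      have hqa : q * star a = 0 := by
        have := congrArg star haq
        simpa [star_mul, hqs] using this
      have hUq : (↑U : A) * q = q := by
        rw [hU, add_mul, mul_assoc, haq, mul_zero, hq2, zero_add]
      have hqU : q * (↑U : A) = q := by
        rw [hU, mul_add, ← mul_assoc, hqa, zero_mul, hq2, zero_add]
      have hUinvq : (↑U⁻¹ : A) * q = q := by
        conv_lhs => rw [← hUq, ← mul_assoc, U.inv_mul, one_mul]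
      have hqUinv : q * (↑U⁻¹ : A) = q := by
        conv_lhs => rw [← hqU, mul_assoc, U.mul_inv, mul_one]
      have hsU : star (↑U : A) = ↑U := by
        rw [hU]; simp [star_add, star_mul, hqs, mul_assoc]
      have hsUinv : star (↑U⁻¹ : A) = ↑U⁻¹ := by
        have h : star (↑U⁻¹ : A) * ↑U = 1 := by
          rw [← hsU, ← star_mul, U.mul_inv, star_one]
        calc star (↑U⁻¹ : A) = star (↑U⁻¹ : A) * (↑U * ↑U⁻¹) := by
              rw [U.mul_inv, mul_one]
          _ = (star (↑U⁻¹ : A) * ↑U) * ↑U⁻¹ := by rw [mul_assoc]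
          _ = ↑U⁻¹ := by rw [h, one_mul]
      refine ⟨↑U⁻¹ * star a, ?_, ?_, ?_, ?_⟩
      · -- a * (U⁻¹ * star a) * a = a
        have hba : (↑U⁻¹ * star a) * a = 1 - q := by
          rw [mul_assoc]
          have hsa : star a * a = ↑U - q := by rw [hU]; abel
          rw [hsa, mul_sub, U.inv_mul, hUinvq]
        rw [mul_assoc, hba, mul_sub, mul_one, haq, sub_zero]
      · -- b a b = b
        have hba : (↑U⁻¹ * star a) * a = 1 - q := by
          rw [mul_assoc]
          have hsa : star a * a = ↑U - q := by rw [hU]; abel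
          rw [hsa, mul_sub, U.inv_mul, hUinvq]
        rw [hba, sub_mul, one_mul, ← mul_assoc, hqUinv, hqa, sub_zero]
      · -- star (a * b) = a * b
        simp only [star_mul, hsUinv, star_star, mul_assoc]
      · have hba : (↑U⁻¹ * star a) * a = 1 - q := by
          rw [mul_assoc]
          have hsa : star a * a = ↑U - q := by rw [hU]; abel
          rw [hsa, mul_sub, U.inv_mul, hUinvq]
        rw [hba, star_sub, star_one, hqs]
  · rintro b ⟨h1, h2, h3, h4⟩ q hqs hq2 haq hu
    obtain ⟨U, hU⟩ := hu
    have e1 := mp_e1 a b h1 h3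
    have e2 := mp_e2 a b h1 h4
    have hqa : q * star a = 0 := by
      have := congrArg star haq
      simpa [star_mul, hqs] using this
    have hqU : q * (↑U : A) = q := by
      rw [hU, mul_add, ← mul_assoc, hqa, zero_mul, hq2, zero_add]
    have hqUinv : q * (↑U⁻¹ : A) = q := by
      conv_lhs => rw [← hqU, mul_assoc, U.mul_inv, mul_one]
    have h5 : (1 - b * a) * (↑U : A) = q := by
      rw [hU]
      calc (1 - b * a) * (star a * a + q)
          = star a * a + q - (b * a * star a) * a - b * (a * q) := by noncomm_ring
        _ = q := by rw [e2, haq, mul_zero, sub_zero]; abel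
    have hq_eq : q = 1 - b * a := by
      calc q = q * ↑U⁻¹ := hqUinv.symm
        _ = ((1 - b * a) * ↑U) * ↑U⁻¹ := by rw [h5]
        _ = 1 - b * a := by rw [mul_assoc, U.mul_inv, mul_one]
    refine ⟨hq_eq, ?_⟩
    have hUb : (↑U : A) * b = star a := by
      rw [hU]
      have hqb : q * b = 0 := by
        rw [hq_eq, sub_mul, one_mul, h2, sub_self]
      rw [add_mul, mul_assoc, e1, hqb, add_zero]
    rw [← hU, Ring.inverse_unit]
    calc b = (↑U⁻¹ : A) * (↑U * b) := by rw [← mul_assoc, U.inv_mul, one_mul]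
      _ = ↑U⁻¹ * star a := by rw [hUb]
end

section
/- If a is a Moore-Penrose invertible element of a unital C*-algebra A with Moore-Penrose inverse a†, then ‖a†‖² = sup { 1/λ : λ ∈ σ(a*a) \ {0} }. -/
lemma mp_aux_isUnit {A : Type*} [Ring A] [Algebra ℂ A] (c d e : A)
    (hcd : c * d = e) (hdc : d * c = e) (hce : c * e = c) (hec : e * c = c)
    (hde : d * e = d) (hed : e * d = d) {lam mu : ℂ} (hlm : lam * mu = 1)
    (h : IsUnit (algebraMap ℂ A mu - d)) : IsUnit (algebraMap ℂ A lam - c) := by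
  have hml : mu * lam = 1 := by rw [mul_comm]; exact hlm
  set z : A := ↑h.unit⁻¹ with hz
  have hx : (algebraMap ℂ A mu - d) = ↑h.unit := h.unit_spec.symm
  have hz1 : (algebraMap ℂ A mu - d) * z = 1 := by rw [hx]; exact h.unit.mul_inv
  have hcx : Commute c (algebraMap ℂ A mu - d) := by
    unfold Commute SemiconjBy
    rw [mul_sub, sub_mul, hcd, hdc, Algebra.commutes]
  have hcz : Commute c z := by
    rw [hz, hx] at *
    exact hcx.units_inv_right
  have hsmul : algebraMap ℂ A mu = mu • (1 : A) := Algebra.algebraMap_eq_smul_one mu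
  have h1e : mu • ((1 - e) * z) = 1 - e := by
    have key : (1 - e) * (algebraMap ℂ A mu - d) = mu • (1 - e) := by
      rw [hsmul]
      simp only [sub_mul, mul_sub, one_mul, mul_one, hed, mul_smul_comm, smul_sub]
      abel
    calc mu • ((1 - e) * z) = (mu • (1 - e)) * z := by rw [smul_mul_assoc]
      _ = (1 - e) * ((algebraMap ℂ A mu - d) * z) := by rw [← key, mul_assoc]
      _ = 1 - e := by rw [hz1, mul_one]
  have hkey : mu • (e * z) - d * z = e := by
    have step : mu • (e * z) - d * z = (algebraMap ℂ A mu - d) * z - mu • ((1 - e) * z) := by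
      rw [hsmul]
      simp only [sub_mul, smul_mul_assoc, one_mul, smul_sub]
      abel
    rw [step, hz1, h1e]
    abel
  have hneg : d * z - mu • (e * z) = -e := by
    have := congrArg Neg.neg hkey
    rwa [neg_sub] at this
  set w : A := mu • (1 - e) - mu • (d * z) with hw
  have hxw : (algebraMap ℂ A lam - c) * w = 1 := by
    have s1 : (algebraMap ℂ A lam - c) * (1 - e) = lam • (1 - e) := by
      rw [Algebra.algebraMap_eq_smul_one lam, sub_mul, smul_mul_assoc, one_mul,
        mul_sub, mul_one, hce]
      abel
    have s2 : (algebraMap ℂ A lam - c) * (d * z) = lam • (d * z) - e * z := by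
      rw [Algebra.algebraMap_eq_smul_one lam, sub_mul, smul_mul_assoc, one_mul, ← mul_assoc, hcd]
    rw [hw, mul_sub, mul_smul_comm, mul_smul_comm, s1, s2, smul_smul, hml, one_smul,
      smul_sub, smul_smul, hml, one_smul, sub_sub_eq_add_sub]
    rw [show (1 : A) - e + mu • (e * z) - d * z = 1 - e - (d * z - mu • (e * z)) from by abel,
      hneg]
    abel
  have hwx : w * (algebraMap ℂ A lam - c) = 1 := by
    have s1 : (1 - e) * (algebraMap ℂ A lam - c) = lam • (1 - e) := by
      rw [Algebra.algebraMap_eq_smul_one lam, mul_sub, mul_smul_comm, mul_one,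
        sub_mul, one_mul, hec]
      abel
    have s2 : (d * z) * (algebraMap ℂ A lam - c) = lam • (d * z) - e * z := by
      rw [Algebra.algebraMap_eq_smul_one lam, mul_sub, mul_smul_comm, mul_one,
        mul_assoc, ← hcz.eq, ← mul_assoc, hdc]
    rw [hw, sub_mul, smul_mul_assoc, smul_mul_assoc, s1, s2, smul_smul, hml, one_smul,
      smul_sub, smul_smul, hml, one_smul, sub_sub_eq_add_sub]
    rw [show (1 : A) - e + mu • (e * z) - d * z = 1 - e - (d * z - mu • (e * z)) from by abel,
      hneg]
    abel
  exact isUnit_iff_exists.mpr ⟨w, hxw, hwx⟩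

/-- If `b` is the Moore-Penrose inverse of `a` in a unital C*-algebra, then
`‖b‖² = sup {1/λ : λ ∈ σ(a*a) \ {0}}`. -/
theorem norm_moore_penrose_inverse_sq {A : Type*} [CStarAlgebra A] (a b : A)
    (hb : a * b * a = a ∧ b * a * b = b ∧
      star (a * b) = a * b ∧ star (b * a) = b * a) :
    ‖b‖ ^ 2 = sSup {x : ℝ | ∃ μ ∈ spectrum ℂ (star a * a) \ {0}, (x : ℂ) = 1 / μ} := by
  obtain ⟨h1, h2, h3, h4⟩ := hb
  have hab : star b * star a = a * b := by rw [← h3, star_mul]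
  have hba : star a * star b = b * a := by rw [← h4, star_mul]
  have hcd : (star a * a) * (b * star b) = b * a := by
    calc star a * a * (b * star b) = star a * ((a * b) * star b) := by noncomm_ring
      _ = star a * ((star b * star a) * star b) := by rw [hab]
      _ = (star a * star b) * (star a * star b) := by noncomm_ring
      _ = (b * a) * (b * a) := by rw [hba]
      _ = b * (a * b * a) := by noncomm_ring
      _ = b * a := by rw [h1]
  have hdc : (b * star b) * (star a * a) = b * a := by
    calc b * star b * (star a * a) = b * ((star b * star a) * a) := by noncomm_ring
      _ = b * ((a * b) * a) := by rw [hab]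
      _ = b * (a * b * a) := by noncomm_ring
      _ = b * a := by rw [h1]
  have hce : (star a * a) * (b * a) = star a * a := by
    calc star a * a * (b * a) = star a * (a * b * a) := by noncomm_ring
      _ = star a * a := by rw [h1]
  have hec : (b * a) * (star a * a) = star a * a := by
    calc b * a * (star a * a) = (star a * star b) * (star a * a) := by rw [hba]
      _ = star a * ((star b * star a) * a) := by noncomm_ring
      _ = star a * ((a * b) * a) := by rw [hab]
      _ = star a * (a * b * a) := by noncomm_ring
      _ = star a * a := by rw [h1]
  have hde : (b * star b) * (b * a) = b * star b := by
    calc b * star b * (b * a) = b * star b * (star a * star b) := by rw [← hba]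
      _ = b * ((star b * star a) * star b) := by noncomm_ring
      _ = b * ((a * b) * star b) := by rw [hab]
      _ = (b * a * b) * star b := by noncomm_ring
      _ = b * star b := by rw [h2]
  have hed : (b * a) * (b * star b) = b * star b := by
    calc b * a * (b * star b) = (b * a * b) * star b := by noncomm_ring
      _ = b * star b := by rw [h2]
  have hiff : ∀ lam : ℂ, lam ≠ 0 →
      (lam ∈ spectrum ℂ (star a * a) ↔ 1 / lam ∈ spectrum ℂ (b * star b)) := by
    intro lam hlam
    have hinv : lam * (1 / lam) = 1 := mul_one_div_cancel hlam
    have hinv' : (1 / lam) * lam = 1 := one_div_mul_cancel hlam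
    rw [spectrum.mem_iff, spectrum.mem_iff]
    constructor
    · exact fun hmem hu => hmem (mp_aux_isUnit _ _ _ hcd hdc hce hec hde hed hinv hu)
    · exact fun hmem hu => hmem (mp_aux_isUnit _ _ _ hdc hcd hde hed hce hec hinv' hu)
  have hS : {x : ℝ | ∃ μ ∈ spectrum ℂ (star a * a) \ {0}, (x : ℂ) = 1 / μ}
      = spectrum ℝ (b * star b) \ {0} := by
    ext x
    simp only [Set.mem_setOf_eq, Set.mem_diff, Set.mem_singleton_iff]
    constructor
    · rintro ⟨mu, ⟨hmu, hmu0⟩, hx⟩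
      have h1m := (hiff mu hmu0).mp hmu
      rw [← hx] at h1m
      refine ⟨?_, ?_⟩
      · rw [← spectrum.algebraMap_mem_iff ℂ]
        simpa using h1m
      · intro hx0
        rw [hx0] at hx
        exact one_div_ne_zero hmu0 (by exact_mod_cast hx.symm)
    · rintro ⟨hxd, hx0⟩
      have hx0' : (x : ℂ) ≠ 0 := by exact_mod_cast hx0
      have hne : (1 / (x : ℂ)) ≠ 0 := one_div_ne_zero hx0'
      refine ⟨1 / (x : ℂ), ⟨?_, hne⟩, by rw [one_div_one_div]⟩
      apply (hiff _ hne).mpr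
      rw [one_div_one_div]
      have : algebraMap ℝ ℂ x ∈ spectrum ℂ (b * star b) :=
        spectrum.algebraMap_mem ℂ hxd
      simpa using this
  rcases subsingleton_or_nontrivial A with hA | hA
  · have hb0 : b = 0 := Subsingleton.elim _ _
    have hsp : spectrum ℂ (star a * a) = ∅ := by
      ext μ
      simp [spectrum.mem_iff, isUnit_of_subsingleton]
    rw [hsp]
    simp [hb0, Real.sSup_empty]
  · rw [hS]
    have hnn : ∀ x ∈ spectrum ℝ (b * star b), 0 ≤ x := by
      have := spectrum_star_mul_self_nonneg (b := star b) (A := A)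
      simpa using this
    have hnorm : ‖b‖ ^ 2 = ‖b * star b‖ := by
      rw [sq, CStarRing.norm_self_mul_star]
    by_cases hd0 : b * star b = 0
    · rw [hd0, spectrum.zero_eq, Set.diff_self, Real.sSup_empty, hnorm, hd0, norm_zero]
    · have hsa : IsSelfAdjoint (b * star b) := IsSelfAdjoint.mul_star_self b
      have hmem : ‖b * star b‖ ∈ spectrum ℝ (b * star b) := by
        rcases CStarAlgebra.norm_or_neg_norm_mem_spectrum hsa with h | h
        · exact h
        · have h0 := hnn _ h
          have hpos : 0 < ‖b * star b‖ := norm_pos_iff.mpr hd0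
          linarith
      have hub : ∀ x ∈ spectrum ℝ (b * star b) \ {0}, x ≤ ‖b * star b‖ := fun x hx =>
        (le_abs_self x).trans (by simpa [Real.norm_eq_abs] using
          spectrum.norm_le_norm_of_mem hx.1)
      have hne0 : ‖b * star b‖ ≠ 0 := norm_ne_zero_iff.mpr hd0
      rw [hnorm]
      refine le_antisymm (le_csSup ⟨‖b * star b‖, fun x hx => hub x hx⟩ ⟨hmem, hne0⟩)
        (csSup_le ⟨_, hmem, hne0⟩ hub)
end

section
/- Let C be a unital C*-subalgebra of a unital C*-algebra B (with the same identity). If c ∈ C is Moore-Penrose invertible in B, then its Moore-Penrose inverse c† belongs to C (inverse closedness of Moore-Penrose invertibility). -/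
/-- Inverse closedness of Moore-Penrose invertibility: if `c` lies in a unital
C*-subalgebra `C` of `B` and is Moore-Penrose invertible in `B`, then its
Moore-Penrose inverse lies in `C`. -/
theorem moore_penrose_inverse_mem_starSubalgebra {B : Type*} [CStarAlgebra B]
    (C : StarSubalgebra ℂ B) (hC : IsClosed (C : Set B))
    (c : B) (hc : c ∈ C) (b : B)
    (hb : c * b * c = c ∧ b * c * b = b ∧
      star (c * b) = c * b ∧ star (b * c) = b * c) :
    b ∈ C := by
  obtain ⟨h1, h2, h3, h4⟩ := hb
  set a : B := star c * c with ha_def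
  set w : B := b * (star b * b) with hw_def
  have ha_sa : IsSelfAdjoint a := IsSelfAdjoint.star_mul_self c
  have hspec : ∀ x ∈ spectrum ℝ a, (0 : ℝ) ≤ x := spectrum_star_mul_self_nonneg
  -- key algebraic identities
  have hA : a * b = star c := by
    calc a * b = star c * (c * b) := by rw [ha_def, mul_assoc]
    _ = star c * star (c * b) := by rw [h3]
    _ = star (c * b * c) := (star_mul (c * b) c).symm
    _ = star c := by rw [h1]
  have hW : a * w = b := by
    calc a * w = (a * b) * (star b * b) := by rw [hw_def, ← mul_assoc]
    _ = (star c * star b) * b := by rw [hA, ← mul_assoc]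
    _ = star (b * c) * b := by rw [star_mul]
    _ = b * c * b := by rw [h4]
    _ = b := h2
  -- approximation step
  have key : ∀ ε : ℝ, 0 < ε → ∃ y ∈ C, ‖b - y‖ ≤ ε * ‖w‖ := by
    intro ε hε
    set u : B := a + algebraMap ℝ B ε with hu_def
    have hspec_ne : ∀ x ∈ spectrum ℝ a, x + ε ≠ 0 := fun x hx => by
      have := hspec x hx; positivity
    have hf_cont : ContinuousOn (fun s : ℝ => s * (s + ε)⁻¹) (spectrum ℝ a) :=
      continuousOn_id.mul <| ContinuousOn.inv₀ (by fun_prop) hspec_ne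
    set t : B := cfc (fun s : ℝ => s * (s + ε)⁻¹) a with ht_def
    have h_ucfc : u = cfc (fun s : ℝ => id s + ε) a := by
      rw [cfc_add_const ε id a continuousOn_id ha_sa, cfc_id ℝ a ha_sa]
    have hfu : u * t = a := by
      rw [h_ucfc, ht_def, ← cfc_mul _ _ a (by fun_prop) hf_cont]
      calc cfc (fun s : ℝ => (id s + ε) * (s * (s + ε)⁻¹)) a
          = cfc (id : ℝ → ℝ) a := by
            apply cfc_congr
            intro x hx
            have hne := hspec_ne x hx
            simp only [id]
            field_simp
        _ = a := cfc_id ℝ a ha_sa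
    have hnorm_t : ‖t‖ ≤ 1 := by
      apply norm_cfc_le zero_le_one
      intro x hx
      have hx0 := hspec x hx
      have hxe : (0:ℝ) < x + ε := by linarith
      rw [Real.norm_eq_abs, abs_of_nonneg (by positivity)]
      rw [← div_eq_mul_inv, div_le_one hxe]
      linarith
    -- u is invertible in B
    have hUnit : IsUnit u := by
      have h0 : (-ε) ∉ spectrum ℝ a := fun h => absurd (hspec _ h) (by simp [hε])
      rw [spectrum.notMem_iff] at h0
      have heq : algebraMap ℝ B (-ε) - a = -u := by
        rw [map_neg, hu_def]; abel
      rw [heq, IsUnit.neg_iff] at h0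
      exact h0
    -- u is in C, and so is its inverse
    have huC : u ∈ C := by
      apply add_mem (mul_mem (star_mem hc) hc)
      rw [IsScalarTower.algebraMap_apply ℝ ℂ B]
      exact C.algebraMap_mem _
    haveI : IsClosed (C : Set B) := hC
    set u' : C := ⟨u, huC⟩ with hu'_def
    have hU' : IsUnit u' := (StarSubalgebra.coe_isUnit C (a := u')).mp hUnit
    obtain ⟨uu, huu⟩ := hU'
    set vC : C := ((uu⁻¹ : Cˣ) : C) with hvC_def
    set v : B := (vC : B) with hv_def
    have hv1 : u * v = 1 := by
      have h := uu.mul_inv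
      rw [huu] at h
      exact congrArg Subtype.val h
    have hv2 : v * u = 1 := by
      have h := uu.inv_mul
      rw [huu] at h
      exact congrArg Subtype.val h
    have ht_eq : v * a = t := by
      calc v * a = v * (u * t) := by rw [hfu]
      _ = (v * u) * t := by rw [mul_assoc]
      _ = t := by rw [hv2, one_mul]
    have hvb : v * b = t * w := by
      calc v * b = v * (a * w) := by rw [hW]
      _ = (v * a) * w := (mul_assoc v a w).symm
      _ = t * w := by rw [ht_eq]
    refine ⟨v * star c, mul_mem vC.2 (star_mem hc), ?_⟩
    have hkey : b - v * star c = ε • (t * w) := by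
      have : v * star c = v * (a * b) := by rw [hA]
      rw [this]
      have ha_eq : a = u - algebraMap ℝ B ε := by rw [hu_def]; abel
      rw [ha_eq, sub_mul, mul_sub, ← mul_assoc, hv2, one_mul, Algebra.algebraMap_eq_smul_one,
        smul_mul_assoc, one_mul, mul_smul_comm, hvb]
      abel
    rw [hkey, norm_smul, Real.norm_eq_abs, abs_of_pos hε]
    have : ‖t * w‖ ≤ ‖w‖ := by
      calc ‖t * w‖ ≤ ‖t‖ * ‖w‖ := norm_mul_le t w
      _ ≤ 1 * ‖w‖ := by gcongr
      _ = ‖w‖ := one_mul _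
    exact mul_le_mul_of_nonneg_left this hε.le
  -- conclude by closedness
  have : b ∈ closure (C : Set B) := by
    rw [Metric.mem_closure_iff]
    intro δ hδ
    obtain ⟨y, hyC, hy⟩ := key (δ / (‖w‖ + 1)) (by positivity)
    refine ⟨y, hyC, ?_⟩
    rw [dist_eq_norm]
    calc ‖b - y‖ ≤ δ / (‖w‖ + 1) * ‖w‖ := hy
    _ < δ := by
        rw [div_mul_eq_mul_div, div_lt_iff₀ (by positivity)]
        nlinarith [norm_nonneg w]
  rwa [hC.closure_eq] at this
end

section
/- Let J₁, J₂ be two-sided ideals in a unital algebra A. If a ∈ A is generalized invertible modulo J₁ (there is b with aba − a ∈ J₁) and left invertible modulo J₂ (there is c with e − ca ∈ J₂), then a is generalized invertible modulo J₁ ∩ J₂, i.e. there exists d ∈ A with ada − a ∈ J₁ ∩ J₂. -/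
/-- If `a` is generalized invertible modulo the two-sided ideal `J₁` and left
invertible modulo the two-sided ideal `J₂`, then `a` is generalized invertible
modulo `J₁ ∩ J₂`. -/
theorem generalized_invertible_mod_inter {A : Type*} [Ring A]
    (J₁ J₂ : TwoSidedIdeal A) (a : A)
    (h₁ : ∃ b : A, a * b * a - a ∈ J₁)
    (h₂ : ∃ c : A, 1 - c * a ∈ J₂) :
    ∃ d : A, a * d * a - a ∈ J₁ ∧ a * d * a - a ∈ J₂ := by
  obtain ⟨b, hb⟩ := h₁
  obtain ⟨c, hc⟩ := h₂
  refine ⟨b + c - b * a * c, ?_, ?_⟩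
  · have key : a * (b + c - b * a * c) * a - a = (a * b * a - a) * (1 - c * a) := by noncomm_ring
    rw [key]
    exact J₁.mul_mem_right _ _ hb
  · have key : a * (b + c - b * a * c) * a - a = (a * b * a - a) * (1 - c * a) := by noncomm_ring
    rw [key]
    exact J₂.mul_mem_left _ _ hc
end

section
/- Let J be a closed ideal of a C*-algebra A and let k ∈ J be a nonzero element of algebraic rank one in J (for every j ∈ J there is α ∈ ℂ with kjk = αk). Then k is of algebraic rank one in A: for every a ∈ A there is μ ∈ ℂ with kak = μk. -/
open scoped CStarAlgebra

section Aux

variable {A : Type*} [NonUnitalCStarAlgebra A]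

local notation "σₙ" => quasispectrum

set_option maxHeartbeats 1000000 in
/-- Key approximation lemma: in a closed ideal `J`, for every `k ∈ J` and `ε > 0`
there is `e ∈ J` which almost acts as a unit on `k` from both sides. -/
lemma exists_almost_unit (J : TwoSidedIdeal A) (hJ : IsClosed (J : Set A))
    {k : A} (hk : k ∈ J) :
    ∀ ε : ℝ, 0 < ε → ∃ e : A, e ∈ J ∧ ‖k - k * e‖ ≤ ε ∧ ‖k - e * k‖ ≤ ε := by
  intro ε hε
  set η : ℝ := 4 * ε ^ 4 with hη
  have hη0 : 0 < η := by positivity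
  set b : A := star k * k + k * star k with hbdef
  have hb : IsSelfAdjoint b := ((IsSelfAdjoint.star_mul_self k).add (.mul_star_self k))
  have hbJ : b ∈ J := J.add_mem (J.mul_mem_left _ _ hk) (J.mul_mem_right _ _ hk)
  set f : ℝ → ℝ := fun x => x ^ 2 / (x ^ 2 + η) with hfdef
  have hfc : Continuous f := by
    apply Continuous.div (by fun_prop) (by fun_prop)
    intro x; positivity
  have hfc' : ContinuousOn f (σₙ ℝ b) := hfc.continuousOn
  have hf0 : f 0 = 0 := by simp [hfdef]
  set e : A := cfcₙ f b with he
  have hesa : IsSelfAdjoint e := cfcₙ_predicate f b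
  -- e ∈ J because f = id * h with h continuous vanishing at 0
  have heJ : e ∈ J := by
    have hhc' : ContinuousOn (fun x : ℝ => x / (x ^ 2 + η)) (σₙ ℝ b) := by
      apply Continuous.continuousOn
      apply Continuous.div (by fun_prop) (by fun_prop)
      intro x; positivity
    have : e = b * cfcₙ (fun x : ℝ => x / (x ^ 2 + η)) b := by
      rw [he, show f = fun x : ℝ => x * (x / (x ^ 2 + η)) from funext fun x => by
        rw [hfdef]; ring,
        cfcₙ_mul _ _ b (continuousOn_id' _) rfl hhc' (by simp), cfcₙ_id' ℝ b]
    rw [this]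
    exact J.mul_mem_right _ _ hbJ
  -- auxiliary products
  have m1 : cfcₙ (fun x : ℝ => x * f x) b = b * e := by
    rw [cfcₙ_mul _ _ b (continuousOn_id' _) rfl hfc' hf0, cfcₙ_id' ℝ b]
  have m2 : cfcₙ (fun x : ℝ => f x * x) b = e * b := by
    rw [cfcₙ_mul _ _ b hfc' hf0 (continuousOn_id' _) rfl, cfcₙ_id' ℝ b]
  have m3 : cfcₙ (fun x : ℝ => f x * (x * f x)) b = e * (b * e) := by
    rw [cfcₙ_mul f (fun x : ℝ => x * f x) b hfc' hf0 ((continuousOn_id' _).mul hfc') (by simp [hf0]), m1]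
  -- the key identity
  have hTb : b - b * e - e * b + e * (b * e) = cfcₙ (fun x : ℝ => x * (1 - f x) ^ 2) b := by
    have h1 : cfcₙ (fun x : ℝ => x * (1 - f x) ^ 2) b
        = cfcₙ (fun x : ℝ => x - (x * f x + (f x * x - f x * (x * f x)))) b :=
      cfcₙ_congr fun x _ => by ring
    rw [h1, cfcₙ_sub (fun x : ℝ => x) (fun x : ℝ => x * f x + (f x * x - f x * (x * f x))) b (continuousOn_id' _) rfl
        ((((continuousOn_id' _).mul hfc').add ((hfc'.mul (continuousOn_id' _)).sub
          (hfc'.mul ((continuousOn_id' _).mul hfc'))))) (by simp [hf0]),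
      cfcₙ_add (fun x : ℝ => x * f x) (fun x : ℝ => f x * x - f x * (x * f x)) b ((continuousOn_id' _).mul hfc') (by simp [hf0])
        ((hfc'.mul (continuousOn_id' _)).sub (hfc'.mul ((continuousOn_id' _).mul hfc')))
        (by simp [hf0]),
      cfcₙ_sub (fun x : ℝ => f x * x) (fun x : ℝ => f x * (x * f x)) b (hfc'.mul (continuousOn_id' _)) (by simp [hf0])
        (hfc'.mul ((continuousOn_id' _).mul hfc')) (by simp [hf0]),
      m1, m2, m3, cfcₙ_id' ℝ b]
    noncomm_ring
  -- the norm bound on the cfcₙ element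
  have hgbound : ‖cfcₙ (fun x : ℝ => x * (1 - f x) ^ 2) b‖ ≤ ε ^ 2 := by
    apply norm_cfcₙ_le
    intro x _
    have hd : 0 < x ^ 2 + η := by positivity
    have h1f : 1 - f x = η / (x ^ 2 + η) := by
      rw [hfdef]; field_simp; ring
    rw [h1f]
    rw [Real.norm_eq_abs]
    have habs : |x * (η / (x ^ 2 + η)) ^ 2| = |x| * (η / (x ^ 2 + η)) ^ 2 := by
      rw [abs_mul, abs_of_nonneg (a := (η / (x ^ 2 + η)) ^ 2) (by positivity)]
    rw [habs]
    -- |x| * η² / (x²+η)² ≤ ε², using (x²+η)² ≥ 4x²η and η = 4ε⁴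
    have key : (|x| * (η / (x ^ 2 + η)) ^ 2) ^ 2 ≤ ε ^ 4 := by
      have hx2 : |x| ^ 2 = x ^ 2 := sq_abs x
      rw [div_pow, mul_pow, hx2, div_pow, ← mul_div_assoc]
      rw [div_le_iff₀ (by positivity)]
      have hAM : 4 * x ^ 2 * η ≤ (x ^ 2 + η) ^ 2 := by nlinarith [sq_nonneg (x ^ 2 - η)]
      have hη4 : η ^ 3 = 4 * ε ^ 4 * η ^ 2 := by rw [hη]; ring
      have h5 : η ^ 2 ≤ (x ^ 2 + η) ^ 2 := by nlinarith [sq_nonneg x]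
      calc x ^ 2 * (η ^ 2) ^ 2 = ε ^ 4 * ((4 * x ^ 2 * η) * η ^ 2) := by
            linear_combination (x ^ 2 * η) * hη4
        _ ≤ ε ^ 4 * ((x ^ 2 + η) ^ 2 * (x ^ 2 + η) ^ 2) := by
            refine mul_le_mul_of_nonneg_left (mul_le_mul hAM h5 (by positivity) (by positivity))
              (by positivity)
        _ = ε ^ 4 * ((x ^ 2 + η) ^ 2) ^ 2 := by ring
    have h0 : (0 : ℝ) ≤ |x| * (η / (x ^ 2 + η)) ^ 2 := by positivity
    nlinarith [key, sq_nonneg (|x| * (η / (x ^ 2 + η)) ^ 2 - ε ^ 2), sq_nonneg ε, hε]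
  -- order facts in the unitization
  letI : PartialOrder A⁺¹ := CStarAlgebra.spectralOrder _
  haveI : StarOrderedRing A⁺¹ := CStarAlgebra.spectralOrderedRing _
  have hE : IsSelfAdjoint (e : A⁺¹) := hesa.inr ℂ
  have hu : IsSelfAdjoint ((1 : A⁺¹) - e) := (IsSelfAdjoint.one (R := A⁺¹)).sub hE
  have key : ∀ c : A, (0 : A⁺¹) ≤ c → (c : A⁺¹) ≤ (b : A⁺¹) →
      ‖c - c * e - e * c + e * (c * e)‖ ≤ ε ^ 2 := by
    intro c hc hcb
    have hconj : ∀ d : A, ((d - d * e - e * d + e * (d * e) : A) : A⁺¹)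
        = star ((1 : A⁺¹) - e) * d * ((1 : A⁺¹) - e) := by
      intro d
      rw [hu.star_eq]
      simp only [Unitization.inr_add, Unitization.inr_sub, Unitization.inr_mul]
      noncomm_ring
    have h1 : (0 : A⁺¹) ≤ ((c - c * e - e * c + e * (c * e) : A) : A⁺¹) := by
      rw [hconj]
      exact star_left_conjugate_nonneg hc _
    have h2 : ((c - c * e - e * c + e * (c * e) : A) : A⁺¹)
        ≤ ((b - b * e - e * b + e * (b * e) : A) : A⁺¹) := by
      rw [hconj, hconj]
      exact star_left_conjugate_le_conjugate hcb _
    calc ‖c - c * e - e * c + e * (c * e)‖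
        = ‖((c - c * e - e * c + e * (c * e) : A) : A⁺¹)‖ :=
          (Unitization.norm_inr _).symm
      _ ≤ ‖((b - b * e - e * b + e * (b * e) : A) : A⁺¹)‖ :=
          CStarAlgebra.norm_le_norm_of_nonneg_of_le h1 h2
      _ = ‖b - b * e - e * b + e * (b * e)‖ := Unitization.norm_inr _
      _ ≤ ε ^ 2 := by rw [hTb]; exact hgbound
  -- nonnegativity and domination of star k * k and k * star k
  have hc1 : (0 : A⁺¹) ≤ ((star k * k : A) : A⁺¹) := by
    rw [Unitization.inr_mul, Unitization.inr_star]
    exact star_mul_self_nonneg _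
  have hc2 : (0 : A⁺¹) ≤ ((k * star k : A) : A⁺¹) := by
    rw [Unitization.inr_mul, Unitization.inr_star]
    exact mul_star_self_nonneg _
  have hcb1 : ((star k * k : A) : A⁺¹) ≤ (b : A⁺¹) := by
    rw [← sub_nonneg, ← Unitization.inr_sub, hbdef,
      show star k * k + k * star k - star k * k = k * star k by abel]
    exact hc2
  have hcb2 : ((k * star k : A) : A⁺¹) ≤ (b : A⁺¹) := by
    rw [← sub_nonneg, ← Unitization.inr_sub, hbdef,
      show star k * k + k * star k - k * star k = star k * k by abel]
    exact hc1
  -- the two norm estimates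
  have est1 : ‖k - k * e‖ ≤ ε := by
    have hz : star (k - k * e) * (k - k * e)
        = star k * k - (star k * k) * e - e * (star k * k) + e * ((star k * k) * e) := by
      rw [star_sub, star_mul, hesa.star_eq]
      noncomm_ring
    have h1 : ‖k - k * e‖ * ‖k - k * e‖ = ‖star (k - k * e) * (k - k * e)‖ :=
      (CStarRing.norm_star_mul_self).symm
    have h2 : ‖star (k - k * e) * (k - k * e)‖ ≤ ε ^ 2 := by
      rw [hz]; exact key _ hc1 hcb1
    nlinarith [norm_nonneg (k - k * e), hε]
  have est2 : ‖k - e * k‖ ≤ ε := by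
    have hz : (k - e * k) * star (k - e * k)
        = k * star k - (k * star k) * e - e * (k * star k) + e * ((k * star k) * e) := by
      rw [star_sub, star_mul, hesa.star_eq]
      noncomm_ring
    have h1 : ‖k - e * k‖ * ‖k - e * k‖ = ‖(k - e * k) * star (k - e * k)‖ :=
      (CStarRing.norm_self_mul_star).symm
    have h2 : ‖(k - e * k) * star (k - e * k)‖ ≤ ε ^ 2 := by
      rw [hz]; exact key _ hc2 hcb2
    nlinarith [norm_nonneg (k - e * k), hε]
  exact ⟨e, heJ, est1, est2⟩

end Aux

/-- If `k` is a nonzero element of algebraic rank one in a closed ideal `J` of a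
C*-algebra `A`, then `k` has algebraic rank one in `A`. -/
theorem algebraic_rank_one_in_ideal_to_algebra {A : Type*} [NonUnitalCStarAlgebra A]
    (J : TwoSidedIdeal A) (hJ : IsClosed (J : Set A))
    (k : A) (hk : k ∈ J) (hk0 : k ≠ 0)
    (h : ∀ j ∈ J, ∃ α : ℂ, k * j * k = α • k) :
    ∀ a : A, ∃ μ : ℂ, k * a * k = μ • k := by
  intro a
  obtain ⟨e, heJ, he1, he2⟩ : ∃ e : ℕ → A, (∀ n, e n ∈ J) ∧
      (∀ n : ℕ, ‖k - k * e n‖ ≤ 1 / (n + 1)) ∧ (∀ n : ℕ, ‖k - e n * k‖ ≤ 1 / (n + 1)) := by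
    have := fun n : ℕ => exists_almost_unit J hJ hk (1 / (n + 1)) (by positivity)
    choose e hm h1 h2 using this
    exact ⟨e, hm, h1, h2⟩
  have lim1 : Filter.Tendsto (fun n => k * e n) Filter.atTop (nhds k) := by
    rw [tendsto_iff_norm_sub_tendsto_zero]
    refine squeeze_zero (fun n => norm_nonneg _) (fun n => ?_)
      tendsto_one_div_add_atTop_nhds_zero_nat
    rw [norm_sub_rev]; exact he1 n
  have lim2 : Filter.Tendsto (fun n => e n * k) Filter.atTop (nhds k) := by
    rw [tendsto_iff_norm_sub_tendsto_zero]
    refine squeeze_zero (fun n => norm_nonneg _) (fun n => ?_)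
      tendsto_one_div_add_atTop_nhds_zero_nat
    rw [norm_sub_rev]; exact he2 n
  have lim3 : Filter.Tendsto (fun n => (k * e n) * a * (e n * k)) Filter.atTop
      (nhds (k * a * k)) := (lim1.mul tendsto_const_nhds).mul lim2
  have hmem : ∀ n, (k * e n) * a * (e n * k) ∈ (Submodule.span ℂ {k} : Submodule ℂ A) := by
    intro n
    obtain ⟨α, hα⟩ := h (e n * a * e n)
      (J.mul_mem_right _ _ (J.mul_mem_right _ _ (heJ n)))
    have hassoc : (k * e n) * a * (e n * k) = k * (e n * a * e n) * k := by
      simp only [mul_assoc]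
    rw [hassoc, hα]
    exact Submodule.smul_mem _ _ (Submodule.mem_span_singleton_self k)
  have hclosed : IsClosed ((Submodule.span ℂ {k} : Submodule ℂ A) : Set A) :=
    Submodule.closed_of_finiteDimensional _
  have hmem' : k * a * k ∈ Submodule.span ℂ {k} :=
    hclosed.mem_of_tendsto lim3 (Filter.Eventually.of_forall hmem)
  obtain ⟨μ, hμ⟩ := Submodule.mem_span_singleton.mp hmem'
  exact ⟨μ, hμ.symm⟩
end

section
/- Let J be a closed ideal of a unital C*-algebra with the compact spectral property, and let q ∈ J be a nonzero projection. Then every strictly decreasing chain q = q₀ > q₁ > q₂ > … of projections below q is finite. -/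
/-- An ideal `J` of a unital C*-algebra has the *compact spectral property* if
every self-adjoint element of `J` has `0` as its only possible accumulation
point of its spectrum. -/
def CompactSpectralProperty {A : Type*} [CStarAlgebra A] (J : TwoSidedIdeal A) : Prop :=
  ∀ a ∈ J, IsSelfAdjoint a → ∀ μ : ℂ, μ ≠ 0 → ¬ AccPt μ (Filter.principal (spectrum ℂ a))

/-- In a closed ideal with the compact spectral property there is no infinite
strictly decreasing chain of projections starting at a nonzero projection. -/
theorem no_infinite_chain_of_projections {A : Type*} [CStarAlgebra A]
    (J : TwoSidedIdeal A) (hJc : IsClosed (J : Set A))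
    (hJ : CompactSpectralProperty J)
    (q : ℕ → A) (hq0 : q 0 ∈ J) (hq0ne : q 0 ≠ 0)
    (hproj : ∀ n, star (q n) = q n ∧ q n * q n = q n)
    (hchain : ∀ n, q n * q (n + 1) = q (n + 1) ∧ q (n + 1) * q n = q (n + 1))
    (hne : ∀ n, q (n + 1) ≠ q n) : False := by
  -- all q n ∈ J
  have hqJ : ∀ n, q n ∈ J := by
    intro n
    induction n with
    | zero => exact hq0
    | succ n ih => exact (hchain n).2 ▸ J.mul_mem_left _ _ ih
  -- transitivity
  have hle : ∀ m k, q m * q (m + k) = q (m + k) ∧ q (m + k) * q m = q (m + k) := by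
    intro m k
    induction k with
    | zero => exact ⟨(hproj m).2, (hproj m).2⟩
    | succ k ih =>
      constructor
      · show q m * q (m+k+1) = q (m+k+1)
        calc q m * q (m+k+1) = q m * (q (m+k) * q (m+k+1)) := by rw [(hchain (m+k)).1]
          _ = (q m * q (m+k)) * q (m+k+1) := by rw [mul_assoc]
          _ = q (m+k) * q (m+k+1) := by rw [ih.1]
          _ = q (m+k+1) := (hchain (m+k)).1
      · show q (m+k+1) * q m = q (m+k+1)
        calc q (m+k+1) * q m = (q (m+k+1) * q (m+k)) * q m := by rw [(hchain (m+k)).2]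
          _ = q (m+k+1) * (q (m+k) * q m) := by rw [mul_assoc]
          _ = q (m+k+1) * q (m+k) := by rw [ih.2]
          _ = q (m+k+1) := (hchain (m+k)).2
  have hle' : ∀ m n, m ≤ n → q m * q n = q n ∧ q n * q m = q n := by
    intro m n hmn
    obtain ⟨k, rfl⟩ := Nat.exists_eq_add_of_le hmn
    exact hle m k
  set p : ℕ → A := fun n => q n - q (n + 1) with hp
  have hpJ : ∀ n, p n ∈ J := fun n => J.sub_mem (hqJ n) (hqJ (n+1))
  have hpstar : ∀ n, star (p n) = p n := by
    intro n; simp [hp, star_sub, (hproj n).1, (hproj (n+1)).1]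
  have hpsq : ∀ n, p n * p n = p n := by
    intro n
    simp only [hp, sub_mul, mul_sub, (hproj n).2, (hproj (n+1)).2, (hchain n).1, (hchain n).2]
    abel
  have hpne : ∀ n, p n ≠ 0 := by
    intro n h
    simp only [hp] at h
    exact hne n (sub_eq_zero.mp h).symm
  -- orthogonality
  have horth : ∀ m n, m ≠ n → p m * p n = 0 := by
    have key : ∀ m n, m < n → p m * p n = 0 ∧ p n * p m = 0 := by
      intro m n hmn
      have h1 := hle' m n (le_of_lt hmn)
      have h2 := hle' m (n+1) (by omega)
      have h3 := hle' (m+1) n (by omega)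
      have h4 := hle' (m+1) (n+1) (by omega)
      constructor
      · simp only [hp, sub_mul, mul_sub, h1.1, h2.1, h3.1, h4.1]; abel
      · simp only [hp, sub_mul, mul_sub, h1.2, h2.2, h3.2, h4.2]; abel
    intro m n hmn
    rcases lt_or_gt_of_ne hmn with h | h
    · exact (key m n h).1
    · exact (key n m h).2
  -- norm bound
  have hpnorm : ∀ n, ‖p n‖ ≤ 1 := by
    intro n
    have h : ‖p n‖ * ‖p n‖ = ‖p n‖ := by
      calc ‖p n‖ * ‖p n‖ = ‖star (p n) * p n‖ := (CStarRing.norm_star_mul_self).symm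
        _ = ‖p n‖ := by rw [hpstar, hpsq]
    nlinarith [norm_nonneg (p n)]
  set f : ℕ → A := fun n => ((2:ℂ)⁻¹)^n • p n with hf
  have hfsum : Summable f := by
    apply Summable.of_norm_bounded (g := fun n => (2⁻¹:ℝ)^n) (summable_geometric_of_lt_one (by norm_num) (by norm_num))
    intro n
    rw [hf]
    calc ‖((2:ℂ)⁻¹)^n • p n‖ = ‖((2:ℂ)⁻¹)^n‖ * ‖p n‖ := norm_smul _ _
      _ ≤ (2⁻¹:ℝ)^n * 1 := by
          apply mul_le_mul _ (hpnorm n) (norm_nonneg _) (by positivity)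
          simp
      _ = (2⁻¹:ℝ)^n := mul_one _
  set b : A := ∑' n, f n with hb
  have hbJ : b ∈ J := by
    refine hJc.mem_of_tendsto hfsum.hasSum (Filter.Eventually.of_forall fun s => ?_)
    exact sum_mem (fun i _ => by
      show (2:ℂ)⁻¹ ^ i • p i ∈ J
      rw [Algebra.smul_def]
      exact J.mul_mem_left _ _ (hpJ i))
  have hbstar : star b = b := by
    rw [hb, tsum_star]
    congr 1; funext n
    simp [hf, star_smul, hpstar, ← Complex.ofReal_ofNat]
  set a : A := q 0 - b with ha
  have haJ : a ∈ J := J.sub_mem hq0 hbJ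
  have hastar : IsSelfAdjoint a := by
    rw [IsSelfAdjoint, ha, star_sub, hbstar, (hproj 0).1]
  -- b * p n
  have hbp : ∀ n, b * p n = ((2:ℂ)⁻¹)^n • p n := by
    intro n
    rw [hb, ← hfsum.tsum_mul_right]
    rw [tsum_eq_single n]
    · rw [hf, smul_mul_assoc, hpsq]
    · intro m hmn
      rw [hf, smul_mul_assoc, horth m n hmn, smul_zero]
  have hq0p : ∀ n, q 0 * p n = p n := by
    intro n
    simp only [hp, mul_sub, (hle' 0 n (Nat.zero_le _)).1, (hle' 0 (n+1) (Nat.zero_le _)).1]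
  -- spectrum
  have hspec : ∀ n, (1 - ((2:ℂ)⁻¹)^n) ∈ spectrum ℂ a := by
    intro n
    rw [spectrum.mem_iff]
    intro hx
    apply hpne n
    have hxp : (algebraMap ℂ A (1 - ((2:ℂ)⁻¹)^n) - a) * p n = 0 := by
      rw [ha, sub_mul, sub_mul, Algebra.algebraMap_eq_smul_one, smul_mul_assoc, one_mul,
        hq0p, hbp, sub_smul, one_smul]
      abel
    obtain ⟨u, hu⟩ := hx
    calc p n = 1 * p n := (one_mul _).symm
      _ = (↑u⁻¹ * ↑u) * p n := by rw [u.inv_mul]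
      _ = ↑u⁻¹ * (↑u * p n) := mul_assoc _ _ _
      _ = ↑u⁻¹ * ((algebraMap ℂ A (1 - ((2:ℂ)⁻¹)^n) - a) * p n) := by rw [hu]
      _ = 0 := by rw [hxp, mul_zero]
  -- accumulation
  have hacc : AccPt 1 (Filter.principal (spectrum ℂ a)) := by
    rw [accPt_iff_nhds]
    intro U hU
    have htend : Filter.Tendsto (fun n => 1 - ((2:ℂ)⁻¹)^n) Filter.atTop (nhds 1) := by
      have := tendsto_pow_atTop_nhds_zero_of_norm_lt_one (x := (2:ℂ)⁻¹) (by
        rw [norm_inv]; simp; norm_num)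
      simpa using (tendsto_const_nhds (x := (1:ℂ))).sub this
    obtain ⟨n, hn⟩ := (htend.eventually_mem hU).exists
    refine ⟨1 - ((2:ℂ)⁻¹)^n, ⟨hn, hspec n⟩, ?_⟩
    intro h
    have : ((2:ℂ)⁻¹)^n = 0 := by linear_combination -h
    simp at this
  exact hJ a haJ hastar 1 one_ne_zero hacc
end

section
/- Let J be a closed ideal with the compact spectral property of a unital C*-algebra, and let q ∈ J be a nonzero projection. Then q is a finite sum of minimal projections in J. -/
/-- `p` is a minimal projection in the ideal `J`. -/
def IsMinimalProjection {A : Type*} [CStarAlgebra A] (J : TwoSidedIdeal A) (p : A) : Prop :=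
  p ∈ J ∧ star p = p ∧ p * p = p ∧ p ≠ 0 ∧
    ∀ r ∈ J, star r = r → r * r = r → r * p = r → p * r = r → r ≠ 0 → r = p

section Aux

variable {A : Type*} [CStarAlgebra A] (J : TwoSidedIdeal A)

/-- `p` is a finite sum of minimal projections of `J`. -/
def IsFinSumMinimal (p : A) : Prop :=
  ∃ (n : ℕ) (f : Fin n → A), (∀ i, IsMinimalProjection J (f i)) ∧ p = ∑ i, f i

variable {J}

lemma IsFinSumMinimal.add {x y : A} (hx : IsFinSumMinimal J x) (hy : IsFinSumMinimal J y) :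
    IsFinSumMinimal J (x + y) := by
  obtain ⟨n, f, hf, rfl⟩ := hx
  obtain ⟨m, g, hg, rfl⟩ := hy
  refine ⟨n + m, fun i => Fin.addCases f g i, fun i => ?_, ?_⟩
  · refine Fin.addCases (fun i => ?_) (fun i => ?_) i
    · simpa using hf i
    · simpa using hg i
  · rw [Fin.sum_univ_add]
    simp

/-- The norm of a nonzero projection is 1. -/
lemma proj_norm_one {p : A} (hsa : star p = p) (hidem : p * p = p) (hne : p ≠ 0) :
    ‖p‖ = 1 := by
  have h1 : ‖p‖ * ‖p‖ = ‖p‖ := by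
    rw [← CStarRing.norm_star_mul_self (x := p), hsa, hidem]
  have h2 : ‖p‖ ≠ 0 := fun h => hne (norm_eq_zero.mp h)
  have h3 : ‖p‖ * ‖p‖ = ‖p‖ * 1 := by rw [h1, mul_one]
  exact mul_left_cancel₀ h2 h3

/-- Key finiteness lemma: in a closed ideal with the compact spectral property,
there is no infinite sequence of nonzero pairwise orthogonal projections below a
projection `q` in the ideal. -/
lemma no_infinite_orthogonal (hJc : IsClosed (J : Set A)) (hJ : CompactSpectralProperty J)
    (q : A) (hq : q ∈ J) (hqsa : star q = q)
    (p : ℕ → A) (hmem : ∀ n, p n ∈ J) (hsa : ∀ n, star (p n) = p n)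
    (hidem : ∀ n, p n * p n = p n) (hne : ∀ n, p n ≠ 0)
    (hle : ∀ n, q * p n = p n)
    (horth : ∀ m n, m ≠ n → p m * p n = 0) : False := by
  set c : ℂ := 2⁻¹ with hc
  have hcnorm : ‖c‖ = 2⁻¹ := by simp [hc]
  have hsumm : Summable (fun n => c ^ n • p n) := by
    apply Summable.of_norm
    apply Summable.of_nonneg_of_le (fun n => norm_nonneg _) (fun n => ?_)
      (summable_geometric_of_lt_one (by norm_num) (show (2:ℝ)⁻¹ < 1 by norm_num))
    rw [norm_smul, norm_pow, hcnorm, proj_norm_one (hsa n) (hidem n) (hne n), mul_one]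
  set a : A := ∑' n, c ^ n • p n with ha
  have hasum : HasSum (fun n => c ^ n • p n) a := hsumm.hasSum
  have haJ : a ∈ J := by
    refine hJc.mem_of_tendsto hasum (Filter.Eventually.of_forall fun s => ?_)
    classical
    induction s using Finset.induction with
    | empty => simpa using J.zero_mem
    | insert _ _ hx ih =>
      rw [Finset.sum_insert hx]
      refine J.add_mem ?_ ih
      rw [Algebra.smul_def]; exact J.mul_mem_left _ _ (hmem _)
  set b : A := q + a with hb
  have hbJ : b ∈ J := J.add_mem hq haJ
  have hbsa : IsSelfAdjoint b := by
    have hstar : star a = a := by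
      rw [ha, tsum_star]
      congr 1; funext n
      rw [star_smul, hsa n, star_pow, hc]
      norm_num
    rw [IsSelfAdjoint, hb, star_add, hqsa, hstar]
  -- b * p k = (1 + c^k) • p k
  have hbp : ∀ k, b * p k = (1 + c ^ k) • p k := by
    intro k
    have hap : HasSum (fun n => (c ^ n • p n) * p k) (a * p k) := hasum.mul_right _
    have heq : (fun n => (c ^ n • p n) * p k) = fun n =>
        if n = k then c ^ k • p k else 0 := by
      funext n
      by_cases h : n = k
      · subst h; rw [smul_mul_assoc, hidem n, if_pos rfl]
      · rw [smul_mul_assoc, horth n k h, smul_zero, if_neg h]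
    rw [heq] at hap
    have hsingle : HasSum (fun n => if n = k then c ^ k • p k else 0) (c ^ k • p k) := by
      convert hasSum_ite_eq k (c ^ k • p k) using 2
    have hak : a * p k = c ^ k • p k := hap.unique hsingle
    rw [hb, add_mul, hak, hle k, add_smul, one_smul]
  -- 1 + c^k ∈ spectrum ℂ b
  have hspec : ∀ k, (1 + c ^ k) ∈ spectrum ℂ b := by
    intro k
    rw [spectrum.mem_iff]
    intro hunit
    obtain ⟨u, hu⟩ := hunit
    have h0 : (algebraMap ℂ A (1 + c ^ k) - b) * p k = 0 := by
      rw [sub_mul, hbp k, Algebra.algebraMap_eq_smul_one, smul_mul_assoc, one_mul, sub_self]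
    have : p k = 0 := by
      calc p k = (↑u⁻¹ * ↑u) * p k := by rw [u.inv_mul, one_mul]
      _ = ↑u⁻¹ * ((algebraMap ℂ A (1 + c ^ k) - b) * p k) := by rw [hu, mul_assoc]
      _ = 0 := by rw [h0, mul_zero]
    exact hne k this
  -- 1 is an accumulation point of the spectrum
  have hacc : AccPt (1 : ℂ) (Filter.principal (spectrum ℂ b)) := by
    rw [accPt_iff_nhds]
    intro U hU
    obtain ⟨ε, hε, hball⟩ := Metric.mem_nhds_iff.mp hU
    obtain ⟨k, hk⟩ := exists_pow_lt_of_lt_one hε (show ‖c‖ < 1 by rw [hcnorm]; norm_num)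
    refine ⟨1 + c ^ k, ⟨hball ?_, hspec k⟩, ?_⟩
    · rw [Metric.mem_ball, dist_eq_norm]
      simpa [norm_pow] using hk
    · intro h
      have : c ^ k = 0 := by linear_combination h
      exact pow_ne_zero k (by norm_num [hc]) this
  exact hJ b hbJ hbsa 1 one_ne_zero hacc

/-- Splitting a non-decomposable projection. -/
lemma split (J : TwoSidedIdeal A) {p : A} (hpJ : p ∈ J) (hpsa : star p = p)
    (hpidem : p * p = p) (hbad : ¬ IsFinSumMinimal J p) :
    ∃ p' e : A, (p' ∈ J ∧ star p' = p' ∧ p' * p' = p' ∧ ¬ IsFinSumMinimal J p') ∧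
      (e ∈ J ∧ star e = e ∧ e * e = e ∧ e ≠ 0) ∧
      p' * p = p' ∧ p * p' = p' ∧ e * p = e ∧ p * e = e ∧ p' * e = 0 ∧ e * p' = 0 := by
  have hp0 : p ≠ 0 := by
    rintro rfl
    exact hbad ⟨0, fun i => 0, fun i => i.elim0, by simp⟩
  have hpnotmin : ¬ IsMinimalProjection J p := by
    intro h
    exact hbad ⟨1, fun _ => p, fun _ => h, by simp⟩
  rw [IsMinimalProjection] at hpnotmin
  push_neg at hpnotmin
  obtain ⟨r, hrJ, hrsa, hridem, hrp, hpr, hr0, hrne⟩ := hpnotmin hpJ hpsa hpidem hp0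
  set e := p - r with he
  have heJ : e ∈ J := J.sub_mem hpJ hrJ
  have hesa : star e = e := by rw [he, star_sub, hpsa, hrsa]
  have heidem : e * e = e := by
    rw [he, sub_mul, mul_sub, mul_sub, hpidem, hpr, hrp, hridem]; abel
  have he0 : e ≠ 0 := fun h => hrne (sub_eq_zero.mp h).symm
  have hre : r * e = 0 := by rw [he, mul_sub, hrp, hridem, sub_self]
  have her : e * r = 0 := by rw [he, sub_mul, hpr, hridem, sub_self]
  have hep : e * p = e := by rw [he, sub_mul, hpidem, hrp]
  have hpe : p * e = e := by rw [he, mul_sub, hpidem, hpr]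
  by_cases hrbad : IsFinSumMinimal J r
  · -- then e must be bad
    have hebad : ¬ IsFinSumMinimal J e := by
      intro hegood
      have : IsFinSumMinimal J p := by
        have := hrbad.add hegood
        rwa [he, add_sub_cancel] at this
      exact hbad this
    exact ⟨e, r, ⟨heJ, hesa, heidem, hebad⟩, ⟨hrJ, hrsa, hridem, hr0⟩,
      hep, hpe, hrp, hpr, her, hre⟩
  · exact ⟨r, e, ⟨hrJ, hrsa, hridem, hrbad⟩, ⟨heJ, hesa, heidem, he0⟩,
      hrp, hpr, hep, hpe, hre, her⟩

end Aux

/-- In a closed ideal with the compact spectral property, every nonzero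
projection is a finite sum of minimal projections. -/
theorem projection_eq_sum_minimal_projections {A : Type*} [CStarAlgebra A]
    (J : TwoSidedIdeal A) (hJc : IsClosed (J : Set A))
    (hJ : CompactSpectralProperty J)
    (q : A) (hq : q ∈ J) (hqsa : star q = q) (hqidem : q * q = q) (hq0 : q ≠ 0) :
    ∃ (n : ℕ) (p : Fin n → A), (∀ i, IsMinimalProjection J (p i)) ∧ q = ∑ i, p i := by
  by_contra hbad
  have hbad' : ¬ IsFinSumMinimal J q := hbad
  -- the type of "bad" projections
  let T := {p : A // p ∈ J ∧ star p = p ∧ p * p = p ∧ ¬ IsFinSumMinimal J p}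
  have main : ∀ t : T, ∃ s : T, ∃ e : A,
      (e ∈ J ∧ star e = e ∧ e * e = e ∧ e ≠ 0) ∧
      (s : A) * (t : A) = s ∧ (t : A) * s = s ∧ e * (t : A) = e ∧ (t : A) * e = e ∧
      (s : A) * e = 0 ∧ e * (s : A) = 0 := by
    rintro ⟨p, hpJ, hpsa, hpidem, hpbad⟩
    obtain ⟨p', e, hp', he, h1, h2, h3, h4, h5, h6⟩ := split J hpJ hpsa hpidem hpbad
    exact ⟨⟨p', hp'⟩, e, he, h1, h2, h3, h4, h5, h6⟩
  choose next eaux hE hsp₁ hsp₂ hep₁ hep₂ hse₁ hse₂ using main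
  let t0 : T := ⟨q, hq, hqsa, hqidem, hbad'⟩
  let seq : ℕ → T := fun n => Nat.rec t0 (fun _ s => next s) n
  let S : ℕ → A := fun n => (seq n).1
  let E : ℕ → A := fun n => eaux (seq n)
  have hS0 : S 0 = q := rfl
  have hstep₁ : ∀ n, S (n+1) * S n = S (n+1) := fun n => hsp₁ (seq n)
  have hstep₂ : ∀ n, S n * S (n+1) = S (n+1) := fun n => hsp₂ (seq n)
  have hES₁ : ∀ n, E n * S n = E n := fun n => hep₁ (seq n)
  have hES₂ : ∀ n, S n * E n = E n := fun n => hep₂ (seq n)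
  have hSE₁ : ∀ n, S (n+1) * E n = 0 := fun n => hse₁ (seq n)
  have hSE₂ : ∀ n, E n * S (n+1) = 0 := fun n => hse₂ (seq n)
  -- chain order facts
  have hmono : ∀ n m, n ≤ m → (S m * S n = S m ∧ S n * S m = S m) := by
    intro n m hnm
    induction m with
    | zero =>
      have : n = 0 := Nat.le_zero.mp hnm
      subst this
      exact ⟨(seq 0).2.2.2.1, (seq 0).2.2.2.1⟩
    | succ m ih =>
      rcases Nat.lt_or_ge n (m + 1) with h | h
      · have hnm' := ih (Nat.lt_succ_iff.mp h)
        constructor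
        · calc S (m+1) * S n = (S (m+1) * S m) * S n := by rw [hstep₁ m]
            _ = S (m+1) * (S m * S n) := by rw [mul_assoc]
            _ = S (m+1) * S m := by rw [hnm'.1]
            _ = S (m+1) := hstep₁ m
        · calc S n * S (m+1) = S n * (S m * S (m+1)) := by rw [hstep₂ m]
            _ = (S n * S m) * S (m+1) := by rw [mul_assoc]
            _ = S m * S (m+1) := by rw [hnm'.2]
            _ = S (m+1) := hstep₂ m
      · have : n = m + 1 := le_antisymm hnm h
        subst this
        exact ⟨(seq (m+1)).2.2.2.1, (seq (m+1)).2.2.2.1⟩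
  -- E m orthogonal to E n for n < m
  have horth' : ∀ n m, n < m → E m * E n = 0 ∧ E n * E m = 0 := by
    intro n m hnm
    have h1 : S m * S (n+1) = S m ∧ S (n+1) * S m = S m := hmono (n+1) m hnm
    constructor
    · have key : E m * S (n+1) = E m := by
        calc E m * S (n+1) = (E m * S m) * S (n+1) := by rw [hES₁ m]
          _ = E m * (S m * S (n+1)) := by rw [mul_assoc]
          _ = E m * S m := by rw [h1.1]
          _ = E m := hES₁ m
      calc E m * E n = (E m * S (n+1)) * E n := by rw [key]
        _ = E m * (S (n+1) * E n) := by rw [mul_assoc]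
        _ = 0 := by rw [hSE₁ n, mul_zero]
    · have key : S (n+1) * E m = E m := by
        calc S (n+1) * E m = S (n+1) * (S m * E m) := by rw [hES₂ m]
          _ = (S (n+1) * S m) * E m := by rw [mul_assoc]
          _ = S m * E m := by rw [h1.2]
          _ = E m := hES₂ m
      calc E n * E m = E n * (S (n+1) * E m) := by rw [key]
        _ = (E n * S (n+1)) * E m := by rw [mul_assoc]
        _ = 0 := by rw [hSE₂ n, zero_mul]
  have hEq : ∀ n, q * E n = E n := by
    intro n
    have h1 : S 0 * S n = S n := (hmono 0 n (Nat.zero_le n)).2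
    calc q * E n = S 0 * (S n * E n) := by rw [hS0, hES₂ n]
      _ = (S 0 * S n) * E n := by rw [mul_assoc]
      _ = S n * E n := by rw [h1]
      _ = E n := hES₂ n
  exact no_infinite_orthogonal hJc hJ q hq hqsa E
    (fun n => (hE (seq n)).1) (fun n => (hE (seq n)).2.1)
    (fun n => (hE (seq n)).2.2.1) (fun n => (hE (seq n)).2.2.2)
    hEq
    (fun m n hmn => by
      rcases Nat.lt_or_ge m n with h | h
      · exact (horth' m n h).2
      · exact (horth' n m (lt_of_le_of_ne h (Ne.symm hmn))).1)
end

section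
/- Let J be a closed ideal with the compact spectral property of a unital C*-algebra, and let j ∈ J \ {0}. Then j*j is a norm limit of finite linear combinations of minimal projections in J. -/
open Filter Topology

lemma no_infinite_orthogonal_s11 {A : Type*} [CStarAlgebra A] (J : TwoSidedIdeal A)
    (hJc : IsClosed (J : Set A)) (hJ : CompactSpectralProperty J)
    (q : A) (hqJ : q ∈ J) (hqs : star q = q)
    (d : ℕ → A) (hdJ : ∀ n, d n ∈ J) (hds : ∀ n, star (d n) = d n)
    (hdp : ∀ n, d n * d n = d n) (hd0 : ∀ n, d n ≠ 0)
    (hqd : ∀ n, q * d n = d n)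
    (horth : ∀ m n, m ≠ n → d m * d n = 0) : False := by
  -- norms of projections are at most 1
  have hnorm : ∀ n, ‖d n‖ ≤ 1 := by
    intro n
    have h1 : ‖d n‖ * ‖d n‖ = ‖d n‖ := by
      conv_rhs => rw [← hdp n]
      rw [← CStarRing.norm_star_mul_self (x := d n), hds n]
    nlinarith [norm_nonneg (d n)]
  set f : ℕ → A := fun n => ((2 : ℝ)⁻¹ ^ (n + 1)) • d n with hf
  have hsum : Summable f := by
    apply Summable.of_norm_bounded (g := fun n => (2 : ℝ)⁻¹ * (2⁻¹) ^ n)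
    · exact (summable_geometric_of_lt_one (by norm_num) (by norm_num)).mul_left _
    · intro n
      rw [hf, norm_smul]
      simp only [norm_pow, Real.norm_eq_abs]
      rw [abs_of_nonneg (by norm_num : (0:ℝ) ≤ 2⁻¹), pow_succ']
      calc (2:ℝ)⁻¹ * 2⁻¹ ^ n * ‖d n‖ ≤ 2⁻¹ * 2⁻¹ ^ n * 1 := by
            apply mul_le_mul_of_nonneg_left (hnorm n); positivity
        _ = 2⁻¹ * 2⁻¹ ^ n := by ring
  set x : A := ∑' n, f n with hx
  have hfJ : ∀ n, f n ∈ J := by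
    intro n
    have : f n = (((2 : ℝ)⁻¹ ^ (n + 1)) • (1 : A)) * d n := by
      rw [smul_mul_assoc, one_mul]
    rw [this]
    exact J.mul_mem_left _ _ (hdJ n)
  have hxJ : x ∈ J := by
    have ht : Tendsto (fun N => ∑ n ∈ Finset.range N, f n) atTop (𝓝 x) :=
      hsum.hasSum.tendsto_sum_nat
    refine hJc.mem_of_tendsto ht (Eventually.of_forall fun N => ?_)
    exact sum_mem (fun n _ => hfJ n)
  set y : A := q - x with hy
  have hyJ : y ∈ J := J.sub_mem hqJ hxJ
  have hys : IsSelfAdjoint y := by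
    have hxs : star x = x := by
      rw [hx, tsum_star]
      congr 1
      funext n
      rw [hf]
      simp only [star_smul, star_trivial, hds n]
    rw [IsSelfAdjoint, hy, star_sub, hxs, hqs]
  -- eigenvalue computation
  have hxd : ∀ n, x * d n = ((2 : ℝ)⁻¹ ^ (n + 1)) • d n := by
    intro n
    rw [hx, ← hsum.tsum_mul_right]
    rw [tsum_eq_single n]
    · rw [hf, smul_mul_assoc, hdp n]
    · intro m hmn
      rw [hf, smul_mul_assoc, horth m n hmn, smul_zero]
  have hyd : ∀ n, y * d n = ((1 : ℝ) - (2 : ℝ)⁻¹ ^ (n + 1)) • d n := by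
    intro n
    rw [hy, sub_mul, hqd n, hxd n, sub_smul, one_smul]
  -- spectral values
  have hspec : ∀ n, (((1 : ℝ) - (2 : ℝ)⁻¹ ^ (n + 1) : ℝ) : ℂ) ∈ spectrum ℂ y := by
    intro n
    rw [spectrum.mem_iff]
    intro hu
    set c : ℝ := (1 : ℝ) - (2 : ℝ)⁻¹ ^ (n + 1) with hc
    have hud : (algebraMap ℂ A (c : ℂ) - y) * d n = 0 := by
      rw [sub_mul, hyd n, Algebra.algebraMap_eq_smul_one, smul_mul_assoc, one_mul]
      rw [← algebraMap_smul (R := ℝ) ℂ c (d n)]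
      · simp
    have := hu.unit.inv_mul
    apply hd0 n
    calc d n = 1 * d n := (one_mul _).symm
      _ = ((hu.unit⁻¹ : Aˣ) : A) * (algebraMap ℂ A (c : ℂ) - y) * d n := by
          rw [IsUnit.val_inv_mul]
      _ = ((hu.unit⁻¹ : Aˣ) : A) * ((algebraMap ℂ A (c : ℂ) - y) * d n) := by
          rw [mul_assoc]
      _ = 0 := by rw [hud, mul_zero]
  -- accumulation at 1
  refine hJ y hyJ hys 1 one_ne_zero ?_
  rw [accPt_iff_nhds]
  intro U hU
  have htend : Tendsto (fun n => (((1 : ℝ) - (2 : ℝ)⁻¹ ^ (n + 1) : ℝ) : ℂ)) atTop (𝓝 1) := by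
    have h2 : Tendsto (fun n : ℕ => (1 : ℝ) - (2 : ℝ)⁻¹ ^ (n + 1)) atTop (𝓝 1) := by
      have := (tendsto_pow_atTop_nhds_zero_of_lt_one (by norm_num : (0:ℝ) ≤ 2⁻¹)
        (by norm_num : (2:ℝ)⁻¹ < 1)).comp (tendsto_add_atTop_nat 1)
      have h3 := (tendsto_const_nhds (x := (1:ℝ)) (f := atTop (α := ℕ))).sub this
      simpa using h3
    have h4 := (Complex.continuous_ofReal.tendsto 1).comp h2
    rw [Complex.ofReal_one] at h4
    exact h4
  obtain ⟨n, hn⟩ := (htend.eventually_mem hU).exists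
  refine ⟨_, ⟨hn, hspec n⟩, ?_⟩
  intro h
  have : ((1 : ℝ) - (2 : ℝ)⁻¹ ^ (n + 1) : ℝ) = 1 := by exact_mod_cast h
  have : (2 : ℝ)⁻¹ ^ (n + 1) = 0 := by linarith
  simp at this

lemma proj_mem_span {A : Type*} [CStarAlgebra A] (J : TwoSidedIdeal A)
    (hJc : IsClosed (J : Set A)) (hJ : CompactSpectralProperty J)
    (q : A) (hqJ : q ∈ J) (hqs : star q = q) (hqp : q * q = q) :
    q ∈ Submodule.span ℂ {p : A | IsMinimalProjection J p} := by
  classical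
  by_contra hq
  set S : Submodule ℂ A := Submodule.span ℂ {p : A | IsMinimalProjection J p} with hS
  have step : ∀ x : A, (x ∈ J ∧ star x = x ∧ x * x = x ∧ x ∉ S) →
      ∃ x' : A, (x' ∈ J ∧ star x' = x' ∧ x' * x' = x' ∧ x' ∉ S) ∧
        x' * x = x' ∧ x * x' = x' ∧
        star (x - x') = x - x' ∧ (x - x') * (x - x') = x - x' ∧ x - x' ≠ 0 := by
    rintro x ⟨hxJ, hxs, hxp, hxS⟩
    have hx0 : x ≠ 0 := by rintro rfl; exact hxS (zero_mem S)
    have hnmin : ¬ IsMinimalProjection J x := fun h => hxS (Submodule.subset_span h)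
    have hvex : ¬ (∀ r ∈ J, star r = r → r * r = r → r * x = r → x * r = r → r ≠ 0 → r = x) :=
      fun h => hnmin ⟨hxJ, hxs, hxp, hx0, h⟩
    push_neg at hvex
    obtain ⟨r, hrJ, hrs, hrp, hrx, hxr, hr0, hrne⟩ := hvex
    have hsJ : x - r ∈ J := J.sub_mem hxJ hrJ
    have hss : star (x - r) = x - r := by rw [star_sub, hxs, hrs]
    have hsp : (x - r) * (x - r) = x - r := by
      have h5 : (x - r) * (x - r) = x * x - x * r - (r * x - r * r) := by noncomm_ring
      rw [h5, hxp, hxr, hrx, hrp]; abel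
    have hs0 : x - r ≠ 0 := sub_ne_zero.mpr (Ne.symm hrne)
    have hsx : (x - r) * x = x - r := by rw [sub_mul, hxp, hrx]
    have hxs' : x * (x - r) = x - r := by rw [mul_sub, hxp, hxr]
    by_cases hrS : r ∈ S
    · by_cases hsS : x - r ∈ S
      · refine absurd ?_ hxS
        have := add_mem hrS hsS
        rwa [add_sub_cancel] at this
      · refine ⟨x - r, ⟨hsJ, hss, hsp, hsS⟩, hsx, hxs', ?_, ?_, ?_⟩
        · rw [sub_sub_cancel]; exact hrs
        · rw [sub_sub_cancel]; exact hrp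
        · rw [sub_sub_cancel]; exact hr0
    · exact ⟨r, ⟨hrJ, hrs, hrp, hrS⟩, hrx, hxr, hss, hsp, hs0⟩
  choose next hnext using step
  let T := {x : A // x ∈ J ∧ star x = x ∧ x * x = x ∧ x ∉ S}
  let g : T → T := fun t => ⟨next t.1 t.2, (hnext t.1 t.2).1⟩
  let sq : ℕ → T := fun n => g^[n] ⟨q, hqJ, hqs, hqp, hq⟩
  set u : ℕ → A := fun n => (sq n).1 with hu
  have hu0 : u 0 = q := rfl
  have hsucc : ∀ n, u (n + 1) = next (u n) (sq n).2 := by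
    intro n
    show (sq (n+1)).1 = _
    have : sq (n + 1) = g (sq n) := Function.iterate_succ_apply' g n _
    rw [this]
  have hspec : ∀ n, u (n+1) * u n = u (n+1) ∧ u n * u (n+1) = u (n+1) ∧
      star (u n - u (n+1)) = u n - u (n+1) ∧
      (u n - u (n+1)) * (u n - u (n+1)) = u n - u (n+1) ∧ u n - u (n+1) ≠ 0 := by
    intro n
    rw [hsucc n]
    exact (hnext (u n) (sq n).2).2
  have hle : ∀ n k, u n * u (n + k) = u (n + k) ∧ u (n + k) * u n = u (n + k) := by
    intro n k
    induction k with
    | zero => exact ⟨(sq n).2.2.2.1, (sq n).2.2.2.1⟩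
    | succ k ih =>
      have h1 := hspec (n + k)
      constructor
      · rw [show n + (k+1) = (n+k)+1 from rfl, ← h1.2.1, ← mul_assoc, ih.1]
      · rw [show n + (k+1) = (n+k)+1 from rfl, ← h1.1, mul_assoc, ih.2, h1.1]
  have hle' : ∀ m n, m ≤ n → u m * u n = u n ∧ u n * u m = u n := by
    intro m n hmn
    obtain ⟨k, rfl⟩ := Nat.exists_eq_add_of_le hmn
    exact hle m k
  set d : ℕ → A := fun n => u n - u (n + 1) with hd
  have hdJ : ∀ n, d n ∈ J := fun n => J.sub_mem (sq n).2.1 (sq (n+1)).2.1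
  have hds : ∀ n, star (d n) = d n := fun n => (hspec n).2.2.1
  have hdp : ∀ n, d n * d n = d n := fun n => (hspec n).2.2.2.1
  have hd0 : ∀ n, d n ≠ 0 := fun n => (hspec n).2.2.2.2
  have hqd : ∀ n, q * d n = d n := by
    intro n
    rw [hd, ← hu0]
    simp only [mul_sub]
    rw [(hle' 0 n (Nat.zero_le n)).1, (hle' 0 (n+1) (Nat.zero_le _)).1]
  have horth0 : ∀ m n, m < n → d m * d n = 0 := by
    intro m n hmn
    have hk : ∀ k, k ≤ n → u k * d n = d n := by
      intro k hk
      rw [hd]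
      simp only [mul_sub]
      rw [(hle' k n hk).1, (hle' k (n+1) (hk.trans (Nat.le_succ n))).1]
    have h1 : u m * d n = d n := hk m hmn.le
    have h2 : u (m+1) * d n = d n := hk (m+1) hmn
    have : d m * d n = u m * d n - u (m+1) * d n := by rw [hd]; simp only [sub_mul]
    rw [this, h1, h2, sub_self]
  have horth : ∀ m n, m ≠ n → d m * d n = 0 := by
    intro m n hmn
    rcases hmn.lt_or_gt with h | h
    · exact horth0 m n h
    · have := congrArg star (horth0 n m h)
      rwa [star_mul, hds, hds, star_zero] at this
  exact no_infinite_orthogonal_s11 J hJc hJ q hqJ hqs d hdJ hds hdp hd0 hqd horth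

/-- If `J` is a closed ideal with the compact spectral property and `j ∈ J` is
nonzero, then `j* j` is a norm limit of finite linear combinations of minimal
projections in `J`. -/
theorem star_mul_self_mem_closure_span_minimal_projections {A : Type*} [CStarAlgebra A]
    (J : TwoSidedIdeal A) (hJc : IsClosed (J : Set A))
    (hJ : CompactSpectralProperty J)
    (j : A) (hj : j ∈ J) (hj0 : j ≠ 0) :
    star j * j ∈ closure (↑(Submodule.span ℂ {p : A | IsMinimalProjection J p}) : Set A) := by
  classical
  set S : Submodule ℂ A := Submodule.span ℂ {p : A | IsMinimalProjection J p} with hS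
  set a : A := star j * j with ha_def
  have ha : IsSelfAdjoint a := IsSelfAdjoint.star_mul_self j
  have haJ : a ∈ J := J.mul_mem_left _ _ hj
  have hσpos : ∀ t ∈ spectrum ℝ a, 0 ≤ t := spectrum_star_mul_self_nonneg
  rw [Metric.mem_closure_iff]
  intro ε hε
  -- isolation of nonzero spectral points
  have hiso : ∀ t ∈ spectrum ℝ a, t ≠ 0 → ∃ U : Set ℝ, IsOpen U ∧ t ∈ U ∧
      ∀ s ∈ U ∩ spectrum ℝ a, s = t := by
    intro t ht ht0
    have hna := hJ a haJ ha (t : ℂ) (by exact_mod_cast ht0)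
    rw [accPt_iff_nhds] at hna
    push_neg at hna
    obtain ⟨V, hV, hVsub⟩ := hna
    obtain ⟨W, hWV, hWopen, htW⟩ := mem_nhds_iff.mp hV
    refine ⟨(fun s : ℝ => (s : ℂ)) ⁻¹' W, hWopen.preimage Complex.continuous_ofReal, htW, ?_⟩
    rintro s ⟨hsW, hsσ⟩
    have hsC : (s : ℂ) ∈ spectrum ℂ a := by
      have := spectrum.algebraMap_mem ℂ hsσ
      simpa using this
    exact_mod_cast hVsub (s : ℂ) ⟨hWV hsW, hsC⟩
  set F : Set ℝ := {t | t ∈ spectrum ℝ a ∧ ε/2 ≤ t} with hF_def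
  have hFiso : ∀ t ∈ F, ∃ U : Set ℝ, IsOpen U ∧ t ∈ U ∧
      ∀ s ∈ U ∩ spectrum ℝ a, s = t := by
    intro t ht
    refine hiso t ht.1 ?_
    intro h
    rw [h] at ht
    have := ht.2
    linarith
  choose! U hUopen hUmem hUsub using hFiso
  have hFcompact : IsCompact F := by
    have h9 : F = spectrum ℝ a ∩ Set.Ici (ε/2) := rfl
    rw [h9]
    exact (spectrum.isCompact a).inter_right isClosed_Ici
  have hFfin : F.Finite := by
    obtain ⟨b, hbF, hbfin, hcover⟩ := hFcompact.elim_finite_subcover_image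
      (fun t ht => hUopen t ht) (fun s hs => Set.mem_biUnion hs (hUmem s hs))
    refine hbfin.subset ?_
    intro s hs
    obtain ⟨t, htb, hsU⟩ := Set.mem_iUnion₂.mp (hcover hs)
    have := hUsub t (hbF htb) s ⟨hsU, hs.1⟩
    rwa [this]
  set Fs : Finset ℝ := hFfin.toFinset with hFs
  have hFsF : ∀ t ∈ Fs, t ∈ F := fun t ht => hFfin.mem_toFinset.mp ht
  set f : ℝ → ℝ → ℝ := fun t s => if s = t then 1 else 0 with hf
  have hcont : ∀ t ∈ F, ContinuousOn (f t) (spectrum ℝ a) := by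
    intro t ht s hs
    by_cases hst : s = t
    · subst hst
      apply ContinuousWithinAt.congr_of_eventuallyEq
        (continuousWithinAt_const (b := (1:ℝ)))
      · filter_upwards [mem_nhdsWithin_of_mem_nhds ((hUopen s ht).mem_nhds (hUmem s ht)),
          self_mem_nhdsWithin] with x hxU hxσ
        have hx : x = s := hUsub s ht x ⟨hxU, hxσ⟩
        simp [hf, hx]
      · simp [hf]
    · apply ContinuousWithinAt.congr_of_eventuallyEq
        (continuousWithinAt_const (b := (0:ℝ)))
      · filter_upwards [mem_nhdsWithin_of_mem_nhds (isOpen_ne.mem_nhds hst)] with x hx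
        simp [hf, hx]
      · simp [hf, hst]
  set p : ℝ → A := fun t => cfc (f t) a with hp
  have hps : ∀ t, IsSelfAdjoint (p t) := fun t => cfc_predicate (f t) a
  have hproj : ∀ t ∈ F, p t * p t = p t := by
    intro t ht
    rw [hp, ← cfc_mul (f t) (f t) a (hcont t ht) (hcont t ht)]
    refine cfc_congr fun x _ => ?_
    by_cases h : x = t <;> simp [hf, h]
  have hmemJ : ∀ t ∈ F, p t ∈ J := by
    intro t ht
    have ht0 : t ≠ 0 := by
      intro h
      rw [h] at ht
      have := ht.2
      linarith
    have hcont' : ContinuousOn (fun s => t⁻¹ * f t s) (spectrum ℝ a) :=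
      continuousOn_const.mul (hcont t ht)
    have key : p t = a * cfc (fun s => t⁻¹ * f t s) a := by
      show cfc (f t) a = a * cfc (fun s => t⁻¹ * f t s) a
      have h1 : cfc (f t) a = cfc (fun s : ℝ => s * (t⁻¹ * f t s)) a := by
        refine cfc_congr fun x _ => ?_
        by_cases h : x = t
        · simp [hf, h, mul_inv_cancel₀ ht0]
        · simp [hf, h]
      rw [h1, cfc_mul (fun s : ℝ => s) (fun s => t⁻¹ * f t s) a continuousOn_id hcont',
        cfc_id' ℝ a]
    rw [key]
    exact J.mul_mem_right _ _ haJ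
  have hspan : ∀ t ∈ F, p t ∈ S := fun t ht =>
    proj_mem_span J hJc hJ (p t) (hmemJ t ht) (hps t).star_eq (hproj t ht)
  set b : A := ∑ t ∈ Fs, t • p t with hb
  have hbS : b ∈ S := by
    refine Submodule.sum_mem S fun t ht => ?_
    rw [← Complex.coe_smul]
    exact S.smul_mem _ (hspan t (hFsF t ht))
  refine ⟨b, hbS, ?_⟩
  rw [dist_eq_norm]
  have hb' : b = cfc (fun s => ∑ t ∈ Fs, t * f t s) a := by
    have h2 : (fun s => ∑ t ∈ Fs, t * f t s) = ∑ t ∈ Fs, (fun s => t * f t s) := by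
      funext s
      simp [Finset.sum_apply]
    rw [h2, cfc_sum (fun t => fun s => t * f t s) a Fs (fun t ht => continuousOn_const.mul (hcont t (hFsF t ht)))]
    rw [hb]
    refine Finset.sum_congr rfl fun t ht => ?_
    rw [cfc_const_mul t (f t) a (hcont t (hFsF t ht))]
  have hab : a - b = cfc (fun s => s - ∑ t ∈ Fs, t * f t s) a := by
    rw [cfc_sub (fun s : ℝ => s) (fun s => ∑ t ∈ Fs, t * f t s) a continuousOn_id
      (continuousOn_finset_sum Fs fun t ht => continuousOn_const.mul (hcont t (hFsF t ht))),
      cfc_id' ℝ a, ← hb']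
  have hnorm : ‖a - b‖ ≤ ε/2 := by
    rw [hab]
    refine norm_cfc_le (by positivity) fun s hs => ?_
    by_cases hsF : s ∈ F
    · have h3 : ∑ t ∈ Fs, t * f t s = s := by
        have h4 : ∀ t ∈ Fs, t * f t s = if t = s then s else 0 := by
          intro t ht
          by_cases h : t = s
          · subst h; simp [hf]
          · have : s ≠ t := fun hh => h hh.symm
            simp [hf, h, this]
        rw [Finset.sum_congr rfl h4, Finset.sum_ite_eq' Fs s (fun _ => s),
          if_pos (hFfin.mem_toFinset.mpr hsF)]
      rw [h3, sub_self, norm_zero]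
      linarith
    · have h5 : ∀ t ∈ Fs, t * f t s = 0 := by
        intro t ht
        have : s ≠ t := fun h => hsF (h ▸ (hFsF t ht))
        simp [hf, this]
      rw [Finset.sum_eq_zero h5, sub_zero, Real.norm_eq_abs, abs_of_nonneg (hσpos s hs)]
      have : ¬ (ε/2 ≤ s) := fun h => hsF ⟨hs, h⟩
      linarith
  calc ‖a - b‖ ≤ ε/2 := hnorm
    _ < ε := by linarith
end

section
/- Every Moore-Penrose ideal of a unital C*-algebra has the compact spectral property: if J is a proper closed ideal such that every element of A invertible modulo J is Moore-Penrose invertible in A, then every self-adjoint element of J has 0 as only possible accumulation point of its spectrum. -/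
private lemma mp_unit_aux {A : Type*} [CStarAlgebra A] {b b' : A}
    (hbsa : IsSelfAdjoint b) (h1 : b * b' * b = b) (h3 : star (b * b') = b * b') :
    IsUnit (b + 1 - b * b') := by
  obtain ⟨e, he_def⟩ : ∃ e : A, e = b * b' := ⟨_, rfl⟩
  rw [← he_def]
  have hse : star e = e := by rw [he_def]; exact h3
  have heb : e * b = b := by rw [he_def]; exact h1
  have hbe : b * e = b := by
    have h := congrArg star heb
    rwa [star_mul, hse, hbsa.star_eq] at h
  have he2 : e * e = e := by
    have h : e * e = b * b' * b * b' := by rw [he_def]; noncomm_ring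
    rw [h, h1, ← he_def]
  obtain ⟨g, hg_def⟩ : ∃ g : A, g = e * b' * e := ⟨_, rfl⟩
  have heg : e * g = g := by
    have h : e * g = (e * e) * b' * e := by rw [hg_def]; noncomm_ring
    rw [h, he2, ← hg_def]
  have hge : g * e = g := by
    have h : g * e = e * b' * (e * e) := by rw [hg_def]; noncomm_ring
    rw [h, he2, ← hg_def]
  have hbg : b * g = e := by
    have h : b * g = (b * e) * b' * e := by rw [hg_def]; noncomm_ring
    rw [h, hbe, ← he_def, he2]
  have k1 : star b' * b = e :=
    calc star b' * b = star b' * star b := by rw [hbsa.star_eq]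
      _ = star (b * b') := (star_mul b b').symm
      _ = e := by rw [h3, ← he_def]
  have hg2 : (e * star b' * e) * b = e := by
    have h : (e * star b' * e) * b = e * (star b' * (e * b)) := by noncomm_ring
    rw [h, heb, k1, he2]
  have hg2e : (e * star b' * e) * e = e * star b' * e := by
    have h : (e * star b' * e) * e = e * star b' * (e * e) := by noncomm_ring
    rw [h, he2]
  have hgb : g * b = e := by
    have h : g = e * star b' * e := by
      calc g = e * g := heg.symm
        _ = ((e * star b' * e) * b) * g := by rw [hg2]
        _ = (e * star b' * e) * (b * g) := by noncomm_ring
        _ = (e * star b' * e) * e := by rw [hbg]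
        _ = e * star b' * e := hg2e
    rw [h, hg2]
  have hcd : (b + 1 - e) * (g + 1 - e) = 1 := by
    have h : (b + 1 - e) * (g + 1 - e)
        = b * g + (b - b * e) + (g - e * g) + (e * e - e) + (1 - e) := by noncomm_ring
    rw [h, hbg, hbe, heg, he2]
    noncomm_ring
  have hdc : (g + 1 - e) * (b + 1 - e) = 1 := by
    have h : (g + 1 - e) * (b + 1 - e)
        = g * b + (g - g * e) + (b - e * b) + (e * e - e) + (1 - e) := by noncomm_ring
    rw [h, hgb, hge, heb, he2]
    noncomm_ring
  exact ⟨⟨b + 1 - e, g + 1 - e, hcd, hdc⟩, rfl⟩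

private lemma mp_shift_unit_aux {A : Type*} [CStarAlgebra A] {b b' : A}
    (hbsa : IsSelfAdjoint b) (h1 : b * b' * b = b) (h3 : star (b * b') = b * b')
    (lam : ℂ) (hlam : lam ≠ 0)
    (hc : IsUnit (algebraMap ℂ A lam - (b + 1 - b * b'))) :
    IsUnit (algebraMap ℂ A lam - b) := by
  obtain ⟨e, he_def⟩ : ∃ e : A, e = b * b' := ⟨_, rfl⟩
  rw [← he_def] at hc
  have hse : star e = e := by rw [he_def]; exact h3
  have heb : e * b = b := by rw [he_def]; exact h1
  have hbe : b * e = b := by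
    have h := congrArg star heb
    rwa [star_mul, hse, hbsa.star_eq] at h
  have he2 : e * e = e := by
    have h : e * e = b * b' * b * b' := by rw [he_def]; noncomm_ring
    rw [h, h1, ← he_def]
  obtain ⟨w, hw_def⟩ : ∃ w : A, w = algebraMap ℂ A lam - (b + 1 - e) := ⟨_, rfl⟩
  rw [← hw_def] at hc
  obtain ⟨u, hu⟩ := hc
  obtain ⟨v, hv_def⟩ : ∃ v : A, v = (↑u⁻¹ : A) := ⟨_, rfl⟩
  have hwv : w * v = 1 := by rw [← hu, hv_def]; exact u.mul_inv
  have hvw : v * w = 1 := by rw [← hu, hv_def]; exact u.inv_mul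
  have hec : e * (b + 1 - e) = b := by
    rw [mul_sub, mul_add, heb, mul_one, he2]; abel
  have hce : (b + 1 - e) * e = b := by
    rw [sub_mul, add_mul, hbe, one_mul, he2]; abel
  have hew : e * w = w * e := by
    rw [hw_def, mul_sub, sub_mul, hec, hce, Algebra.commutes]
  have heu : e * v = v * e := by
    calc e * v = (v * w) * (e * v) := by rw [hvw, one_mul]
      _ = (v * (w * e)) * v := by noncomm_ring
      _ = (v * (e * w)) * v := by rw [hew]
      _ = (v * e) * (w * v) := by noncomm_ring
      _ = v * e := by rw [hwv, mul_one]
  have k_e : (algebraMap ℂ A lam - b) * e = w * e := by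
    rw [sub_mul, hbe, hw_def, sub_mul, hce]
  have k_e2 : e * (algebraMap ℂ A lam - b) = e * w := by
    rw [mul_sub, heb, hw_def, mul_sub, hec]
  have part1 : (algebraMap ℂ A lam - b) * (v * e) = e := by
    calc (algebraMap ℂ A lam - b) * (v * e)
        = (algebraMap ℂ A lam - b) * (e * v) := by rw [heu]
      _ = ((algebraMap ℂ A lam - b) * e) * v := by noncomm_ring
      _ = (w * e) * v := by rw [k_e]
      _ = w * (e * v) := by noncomm_ring
      _ = w * (v * e) := by rw [heu]
      _ = (w * v) * e := by noncomm_ring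
      _ = e := by rw [hwv, one_mul]
  have part1' : (v * e) * (algebraMap ℂ A lam - b) = e := by
    calc (v * e) * (algebraMap ℂ A lam - b)
        = v * (e * (algebraMap ℂ A lam - b)) := by noncomm_ring
      _ = v * (e * w) := by rw [k_e2]
      _ = v * (w * e) := by rw [hew]
      _ = (v * w) * e := by noncomm_ring
      _ = e := by rw [hvw, one_mul]
  have key1 : (algebraMap ℂ A lam - b) * (1 - e) = lam • (1 - e) := by
    have h : (algebraMap ℂ A lam - b) * (1 - e)
        = algebraMap ℂ A lam * (1 - e) - b + b * e := by noncomm_ring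
    rw [h, hbe, Algebra.algebraMap_eq_smul_one, smul_mul_assoc, one_mul]
    abel
  have key2 : (1 - e) * (algebraMap ℂ A lam - b) = lam • (1 - e) := by
    have h : (1 - e) * (algebraMap ℂ A lam - b)
        = (1 - e) * algebraMap ℂ A lam - b + e * b := by noncomm_ring
    rw [h, heb, ← Algebra.commutes, Algebra.algebraMap_eq_smul_one, smul_mul_assoc, one_mul]
    abel
  have part2 : (algebraMap ℂ A lam - b) * (lam⁻¹ • (1 - e)) = 1 - e := by
    rw [mul_smul_comm, key1, smul_smul, inv_mul_cancel₀ hlam, one_smul]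
  have part2' : (lam⁻¹ • (1 - e)) * (algebraMap ℂ A lam - b) = 1 - e := by
    rw [smul_mul_assoc, key2, smul_smul, inv_mul_cancel₀ hlam, one_smul]
  have hy1 : (algebraMap ℂ A lam - b) * (v * e + lam⁻¹ • (1 - e)) = 1 := by
    rw [mul_add, part1, part2]; abel
  have hy2 : (v * e + lam⁻¹ • (1 - e)) * (algebraMap ℂ A lam - b) = 1 := by
    rw [add_mul, part1', part2']; abel
  exact ⟨⟨algebraMap ℂ A lam - b, v * e + lam⁻¹ • (1 - e), hy1, hy2⟩, rfl⟩

/-- Every Moore-Penrose ideal of a unital C*-algebra has the compact spectral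
property: if every element invertible modulo the proper closed ideal `J` is
Moore-Penrose invertible, then every self-adjoint element of `J` has `0` as
only possible accumulation point of its spectrum. -/
theorem moore_penrose_ideal_compact_spectral {A : Type*} [CStarAlgebra A]
    (J : TwoSidedIdeal A) (hJc : IsClosed (J : Set A)) (hJp : J ≠ ⊤)
    (hMP : ∀ a : A, (∃ b : A, a * b - 1 ∈ J ∧ b * a - 1 ∈ J) →
      ∃ b : A, a * b * a = a ∧ b * a * b = b ∧
        star (a * b) = a * b ∧ star (b * a) = b * a) :
    ∀ a ∈ J, IsSelfAdjoint a → ∀ μ : ℂ, μ ≠ 0 →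
      ¬ AccPt μ (Filter.principal (spectrum ℂ a)) := by
  intro a haJ hsa μ hμ hacc
  have hacc' : μ ∈ closure (spectrum ℂ a \ {μ}) := by
    rw [mem_closure_iff_nhds]
    intro U hU
    obtain ⟨y, ⟨hyU, hyC⟩, hyne⟩ := accPt_iff_nhds.mp hacc U hU
    exact ⟨y, hyU, hyC, hyne⟩
  by_cases him : μ.im = 0
  · -- real nonzero μ
    obtain ⟨b, hb_def⟩ : ∃ b : A, b = a - algebraMap ℂ A μ := ⟨_, rfl⟩
    have hbsa : IsSelfAdjoint b := by
      rw [IsSelfAdjoint, hb_def, star_sub, hsa.star_eq, ← algebraMap_star_comm]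
      congr 2
      rw [Complex.star_def, Complex.conj_eq_iff_im.mpr him]
    obtain ⟨b', h1, h2, h3, h4⟩ := hMP b (by
      refine ⟨algebraMap ℂ A (-μ⁻¹), ?_, ?_⟩
      · have hμμ : algebraMap ℂ A (μ * -μ⁻¹) = -1 := by
          rw [show μ * -μ⁻¹ = -1 by field_simp]; simp
        have h : b * algebraMap ℂ A (-μ⁻¹) - 1 = a * algebraMap ℂ A (-μ⁻¹) := by
          rw [hb_def, sub_mul, ← map_mul, hμμ]; abel
        rw [h]
        exact J.mul_mem_right _ _ haJ
      · have hμμ : algebraMap ℂ A (-μ⁻¹ * μ) = -1 := by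
          rw [show -μ⁻¹ * μ = -1 by field_simp]; simp
        have h : algebraMap ℂ A (-μ⁻¹) * b - 1 = algebraMap ℂ A (-μ⁻¹) * a := by
          rw [hb_def, mul_sub, ← map_mul, hμμ]; abel
        rw [h]
        exact J.mul_mem_left _ _ haJ)
    have hc_unit : IsUnit (b + 1 - b * b') := mp_unit_aux hbsa h1 h3
    have hS_closed : IsClosed ((fun z : ℂ => z - μ) ⁻¹' (spectrum ℂ (b + 1 - b * b'))) :=
      (spectrum.isClosed _).preimage (continuous_id.sub continuous_const)
    have hsub : spectrum ℂ a \ {μ} ⊆ (fun z : ℂ => z - μ) ⁻¹' (spectrum ℂ (b + 1 - b * b')) := by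
      rintro z ⟨hz, hzne⟩
      by_contra hzS
      have hlam : z - μ ≠ 0 := sub_ne_zero.mpr (by simpa using hzne)
      have hunit : IsUnit (algebraMap ℂ A (z - μ) - (b + 1 - b * b')) :=
        spectrum.notMem_iff.mp hzS
      have hbu := mp_shift_unit_aux hbsa h1 h3 (z - μ) hlam hunit
      have heq : algebraMap ℂ A (z - μ) - b = algebraMap ℂ A z - a := by
        rw [hb_def, map_sub]; abel
      rw [heq] at hbu
      exact spectrum.notMem_iff.mpr hbu hz
    have hμS : μ ∈ (fun z : ℂ => z - μ) ⁻¹' (spectrum ℂ (b + 1 - b * b')) :=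
      hS_closed.closure_subset ((closure_mono hsub) hacc')
    have h0 : (0 : ℂ) ∈ spectrum ℂ (b + 1 - b * b') := by simpa using hμS
    exact (spectrum.zero_mem_iff ℂ).mp h0 hc_unit
  · -- non-real μ: spectrum of a self-adjoint element is real
    have hsub : spectrum ℂ a \ {μ} ⊆ Complex.im ⁻¹' {0} := by
      rintro z ⟨hz, -⟩
      have hz' := hsa.mem_spectrum_eq_re hz
      simp only [Set.mem_preimage, Set.mem_singleton_iff]
      rw [hz']
      exact Complex.ofReal_im _
    have hclosed : IsClosed (Complex.im ⁻¹' ({0} : Set ℝ)) :=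
      isClosed_singleton.preimage Complex.continuous_im
    have hμ' : μ ∈ Complex.im ⁻¹' ({0} : Set ℝ) :=
      hclosed.closure_subset ((closure_mono hsub) hacc')
    exact him hμ'
end

section
/- For each t in an index set T, let J_t be a Moore-Penrose ideal of a unital C*-algebra A_t. Then the c₀-direct sum ⊕_{t∈T} J_t is a Moore-Penrose ideal of the ℓ∞-direct product Π_{t∈T} A_t. -/
open scoped ENNReal

/-- Pointwise: if `x*y` and `y*x` are within `1/2` of `1`, then `x` is invertible
with inverse of norm at most `2 * ‖y‖`, giving a Moore-Penrose inverse. -/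
lemma aux_unit {B : Type*} [CStarAlgebra B] [Nontrivial B] {x y : B}
    (h1 : ‖x * y - 1‖ < 1 / 2) (h2 : ‖y * x - 1‖ < 1 / 2) :
    ∃ c : B, x * c * x = x ∧ c * x * c = c ∧ star (x * c) = x * c ∧
      star (c * x) = c * x ∧ ‖c‖ ≤ 2 * ‖y‖ := by
  have hn1 : ‖1 - x * y‖ < 1 := by rw [norm_sub_rev]; linarith
  have hn2 : ‖1 - y * x‖ < 1 := by rw [norm_sub_rev]; linarith
  set u1 := Units.oneSub (1 - x * y) hn1 with hu1
  set u2 := Units.oneSub (1 - y * x) hn2 with hu2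
  have hval1 : (u1 : B) = x * y := by simp [hu1]
  have hval2 : (u2 : B) = y * x := by simp [hu2]
  set c := y * (↑u1⁻¹ : B) with hc
  set d := (↑u2⁻¹ : B) * y with hd
  have hxc : x * c = 1 := by
    rw [hc, ← mul_assoc, ← hval1, Units.mul_inv]
  have hdx : d * x = 1 := by
    rw [hd, mul_assoc, ← hval2, Units.inv_mul]
  have hdc : d = c := by
    calc d = d * (x * c) := by rw [hxc, mul_one]
    _ = (d * x) * c := by simp only [hd, mul_assoc]
    _ = c := by rw [hdx, one_mul]
  have hcx : c * x = 1 := by rw [← hdc, hdx]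
  have hinv : (↑u1⁻¹ : B) = ∑' n : ℕ, (1 - x * y) ^ n := rfl
  have hb : ‖(↑u1⁻¹ : B)‖ ≤ 2 := by
    rw [hinv]
    have := tsum_geometric_le_of_norm_lt_one (1 - x * y) hn1
    have h1' : ‖(1 : B)‖ = 1 := norm_one
    have h2' : (1 - ‖1 - x * y‖)⁻¹ ≤ 2 := by
      rw [norm_sub_rev] at hn1 ⊢
      have hpos : (1:ℝ)/2 ≤ 1 - ‖x * y - 1‖ := by linarith [norm_sub_rev (x*y) 1 ▸ h1]
      calc (1 - ‖x * y - 1‖)⁻¹ ≤ ((1:ℝ)/2)⁻¹ := by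
            apply inv_anti₀ (by norm_num) hpos
      _ = 2 := by norm_num
    linarith
  refine ⟨c, ?_, ?_, ?_, ?_, ?_⟩
  · rw [hxc, one_mul]
  · rw [hcx, one_mul]
  · rw [hxc, star_one]
  · rw [hcx, star_one]
  · calc ‖c‖ ≤ ‖y‖ * ‖(↑u1⁻¹ : B)‖ := norm_mul_le _ _
    _ ≤ ‖y‖ * 2 := by nlinarith [norm_nonneg y]
    _ = 2 * ‖y‖ := by ring

/-- A direct sum of Moore-Penrose ideals is a Moore-Penrose ideal of the direct
product: if each `J t` is a Moore-Penrose ideal of the unital C*-algebra `A t`,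
and `a` in the ℓ∞-product `Π A t` is invertible modulo the c₀-direct sum
`⊕ J t`, then `a` is Moore-Penrose invertible in the product. -/
theorem directSum_moore_penrose_ideal {T : Type*} {A : T → Type*}
    [∀ t, CStarAlgebra (A t)] [∀ t, Nontrivial (A t)]
    (J : ∀ t, TwoSidedIdeal (A t)) (hclosed : ∀ t, IsClosed (J t : Set (A t)))
    (hMP : ∀ t, ∀ a : A t, (∃ b : A t, a * b - 1 ∈ J t ∧ b * a - 1 ∈ J t) →
      ∃ b : A t, a * b * a = a ∧ b * a * b = b ∧
        star (a * b) = a * b ∧ star (b * a) = b * a)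
    (a : lp (fun t => A t) ∞)
    (ha : ∃ b : lp (fun t => A t) ∞,
      ((∀ t, (a * b - 1) t ∈ J t) ∧
        ∀ ε : ℝ, 0 < ε → {t : T | ε ≤ ‖(a * b - 1) t‖}.Finite) ∧
      ((∀ t, (b * a - 1) t ∈ J t) ∧
        ∀ ε : ℝ, 0 < ε → {t : T | ε ≤ ‖(b * a - 1) t‖}.Finite)) :
    ∃ b : lp (fun t => A t) ∞, a * b * a = a ∧ b * a * b = b ∧
      star (a * b) = a * b ∧ star (b * a) = b * a := by
  classical
  obtain ⟨b, ⟨hab1, hab2⟩, ⟨hba1, hba2⟩⟩ := ha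
  have happ : ∀ (f g : lp (fun t => A t) ∞) (t : T),
      (f * g - 1) t = f t * g t - 1 := by
    intro f g t
    simp [lp.coeFn_sub, lp.infty_coeFn_mul, lp.infty_coeFn_one]
    rfl
  set F : Set T := {t | (1:ℝ)/2 ≤ ‖(a * b - 1) t‖} ∪ {t | (1:ℝ)/2 ≤ ‖(b * a - 1) t‖}
    with hFdef
  have hF : F.Finite := (hab2 _ (by norm_num)).union (hba2 _ (by norm_num))
  have key : ∀ t : T, ∃ c : A t, a t * c * a t = a t ∧ c * a t * c = c ∧
      star (a t * c) = a t * c ∧ star (c * a t) = c * a t ∧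
      (t ∉ F → ‖c‖ ≤ 2 * ‖b‖) := by
    intro t
    by_cases ht : t ∈ F
    · obtain ⟨c, h1, h2, h3, h4⟩ := hMP t (a t) ⟨b t, by
        constructor
        · have := hab1 t; rwa [happ] at this
        · have := hba1 t; rwa [happ] at this⟩
      exact ⟨c, h1, h2, h3, h4, fun h => absurd ht h⟩
    · rw [hFdef, Set.mem_union] at ht
      push_neg at ht
      obtain ⟨ht1, ht2⟩ := ht
      rw [Set.mem_setOf_eq, not_le, happ] at ht1 ht2
      obtain ⟨c, h1, h2, h3, h4, h5⟩ := aux_unit ht1 ht2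
      refine ⟨c, h1, h2, h3, h4, fun _ => ?_⟩
      calc ‖c‖ ≤ 2 * ‖b t‖ := h5
      _ ≤ 2 * ‖b‖ := by
          have := lp.norm_apply_le_norm ENNReal.top_ne_zero b t
          linarith
  choose c hc1 hc2 hc3 hc4 hc5 using key
  have hmem : Memℓp c ∞ := by
    apply memℓp_infty
    obtain ⟨M, hM⟩ := (hF.image fun t => ‖c t‖).bddAbove
    refine ⟨max M (2 * ‖b‖), ?_⟩
    rintro x ⟨t, rfl⟩
    by_cases ht : t ∈ F
    · exact le_max_of_le_left (hM ⟨t, ht, rfl⟩)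
    · exact le_max_of_le_right (hc5 t ht)
  refine ⟨⟨c, hmem⟩, ?_, ?_, ?_, ?_⟩
  · apply lp.ext; funext t
    simpa [lp.infty_coeFn_mul] using hc1 t
  · apply lp.ext; funext t
    simpa [lp.infty_coeFn_mul] using hc2 t
  · apply lp.ext; funext t
    simpa [lp.infty_coeFn_mul, lp.coeFn_star] using hc3 t
  · apply lp.ext; funext t
    simpa [lp.infty_coeFn_mul, lp.coeFn_star] using hc4 t
end

section
/- Let A be a unital C*-algebra and J a closed ideal that lifts Moore-Penrose invertible elements (whenever a + J is Moore-Penrose invertible in A/J, there is j ∈ J with a + j Moore-Penrose invertible in A). Then J lifts projections: whenever p + J is a projection in A/J, there is a projection q ∈ A with p + J = q + J. -/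
/-- A closed two-sided ideal in a unital C*-algebra is closed under `star`. -/
lemma star_mem_of_isClosed_twoSidedIdeal {A : Type*} [CStarAlgebra A]
    (J : TwoSidedIdeal A) (hJc : IsClosed (J : Set A)) {a : A} (ha : a ∈ J) :
    star a ∈ J := by
  have hbsa : IsSelfAdjoint (a * star a) := by rw [IsSelfAdjoint, star_mul]; simp
  have hspec : ∀ t ∈ spectrum ℝ (a * star a), 0 ≤ t := by
    have := spectrum_star_mul_self_nonneg (b := star a) (A := A)
    simpa using this
  have hmem : star a ∈ closure (J : Set A) := by
    rw [Metric.mem_closure_iff]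
    intro ε hε
    set b : A := a * star a with hbdef
    set δ : ℝ := ε ^ 2 with hδdef
    have hδ : 0 < δ := by positivity
    have hne : ∀ t ∈ spectrum ℝ b, δ + t ≠ 0 := fun t ht => by
      have := hspec t ht; positivity
    set g : ℝ → ℝ := fun t => (δ + t)⁻¹ with hgdef
    have hg : ContinuousOn g (spectrum ℝ b) :=
      (continuousOn_const.add continuousOn_id).inv₀ hne
    have hδg : ContinuousOn (fun t : ℝ => δ * g t) (spectrum ℝ b) :=
      continuousOn_const.mul hg
    set v : A := cfc (fun t : ℝ => δ * g t) b with hvdef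
    have hvsa : IsSelfAdjoint v := cfc_predicate _ b
    set u : A := b * cfc g b with hudef
    have huJ : u ∈ J := by
      rw [hudef, hbdef, mul_assoc]
      exact J.mul_mem_right _ _ ha
    refine ⟨star a * u, J.mul_mem_left _ _ huJ, ?_⟩
    have hid : ContinuousOn (fun t : ℝ => t) (spectrum ℝ b) := continuous_id'.continuousOn
    have hucfc : u = cfc (fun t : ℝ => t * g t) b := by
      rw [cfc_mul _ _ b hid hg, cfc_id' ℝ b]
    have hunit : (1 : A) - u = v := by
      rw [hucfc, hvdef, ← cfc_const_one (R := ℝ) b,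
        ← cfc_sub _ _ b continuousOn_const
          (show ContinuousOn (fun t : ℝ => t * g t) (spectrum ℝ b) from hid.mul hg)]
      apply cfc_congr
      intro t ht
      have h0 := hne t ht
      simp only [hgdef]
      field_simp
      ring
    have hkey : star (star a * v) * (star a * v)
        = cfc (fun t : ℝ => (δ * g t) * (t * (δ * g t))) b := by
      rw [star_mul, star_star, hvsa.star_eq]
      rw [cfc_mul _ _ b hδg
          (show ContinuousOn (fun t : ℝ => t * (δ * g t)) (spectrum ℝ b) from hid.mul hδg),
        cfc_mul _ _ b hid hδg, cfc_id' ℝ b, ← hvdef]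
      simp [hbdef, mul_assoc]
    have hnorm2 : ‖star a * v‖ * ‖star a * v‖ ≤ δ / 4 := by
      rw [← CStarRing.norm_star_mul_self, hkey]
      refine norm_cfc_le (by positivity) fun t ht => ?_
      have ht0 : 0 ≤ t := hspec t ht
      have hs : 0 < δ + t := by positivity
      rw [Real.norm_eq_abs, abs_of_nonneg (by positivity)]
      have heq : (δ * (δ + t)⁻¹) * (t * (δ * (δ + t)⁻¹)) = δ ^ 2 * t / (δ + t) ^ 2 := by
        field_simp
      rw [hgdef]
      simp only []
      rw [heq, div_le_iff₀ (by positivity)]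
      nlinarith [mul_nonneg hδ.le (sq_nonneg (δ - t))]
    have hlt : ‖star a * v‖ < ε := by
      nlinarith [norm_nonneg (star a * v)]
    rw [dist_eq_norm, ← mul_one_sub, hunit]
    exact hlt
  rwa [hJc.closure_eq] at hmem

/-- If a closed ideal `J` of a unital C*-algebra lifts Moore-Penrose invertible
elements, then `J` lifts projections. -/
theorem lifts_moore_penrose_imp_lifts_projections {A : Type*} [CStarAlgebra A]
    (J : TwoSidedIdeal A) (hJc : IsClosed (J : Set A))
    (hlift : ∀ a : A,
      (∃ b : A, a * b * a - a ∈ J ∧ b * a * b - b ∈ J ∧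
        star (a * b) - a * b ∈ J ∧ star (b * a) - b * a ∈ J) →
      ∃ j ∈ J, ∃ c : A, (a + j) * c * (a + j) = a + j ∧ c * (a + j) * c = c ∧
        star ((a + j) * c) = (a + j) * c ∧ star (c * (a + j)) = c * (a + j))
    (p : A) (hsa : star p - p ∈ J) (hidem : p * p - p ∈ J) :
    ∃ q : A, (star q = q ∧ q * q = q) ∧ p - q ∈ J := by
  have hcube : p * p * p - p ∈ J := by
    have heq : p * p * p - p = (p * p - p) * p + (p * p - p) := by noncomm_ring
    rw [heq]
    exact J.add_mem (J.mul_mem_right _ _ hidem) hidem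
  have hstar2 : star (p * p) - p * p ∈ J := by
    have heq : star (p * p) - p * p = star p * (star p - p) + (star p - p) * p := by
      rw [star_mul]; noncomm_ring
    rw [heq]
    exact J.add_mem (J.mul_mem_left _ _ hsa) (J.mul_mem_right _ _ hsa)
  obtain ⟨j, hj, c, h1, h2, h3, h4⟩ := hlift p ⟨p, hcube, hcube, hstar2, hstar2⟩
  refine ⟨(p + j) * c, ⟨h3, ?_⟩, ?_⟩
  · calc ((p + j) * c) * ((p + j) * c) = ((p + j) * c * (p + j)) * c := by noncomm_ring
      _ = (p + j) * c := by rw [h1]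
  · have hstarj : star j ∈ J := star_mem_of_isClosed_twoSidedIdeal J hJc hj
    -- `star (p+j) - p ∈ J`
    have hss : star (p + j) - p ∈ J := by
      have heq : star (p + j) - p = star j + (star p - p) := by rw [star_add]; abel
      rw [heq]
      exact J.add_mem hstarj hsa
    -- `star (p+j) = star (p+j) * ((p+j)*c)`
    have e1 : star (p + j) = star (p + j) * ((p + j) * c) := by
      conv_lhs => rw [← h1]
      rw [star_mul, h3]
    -- part A : `p - p * ((p+j)*c) ∈ J`
    have hA : p - p * ((p + j) * c) ∈ J := by
      have heq : p - p * ((p + j) * c)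
          = -(star (p + j) - p) + (star (p + j) - p) * ((p + j) * c) := by
        rw [sub_mul, ← e1]; abel
      rw [heq]
      exact J.add_mem (J.neg_mem hss) (J.mul_mem_right _ _ hss)
    -- part B : `p * ((p+j)*c) - (p+j)*c ∈ J`
    have hB : p * ((p + j) * c) - (p + j) * c ∈ J := by
      have heq : p * ((p + j) * c) - (p + j) * c
          = ((p * p - p) + (p * j - j)) * c := by noncomm_ring
      rw [heq]
      exact J.mul_mem_right _ _
        (J.add_mem hidem (J.sub_mem (J.mul_mem_left _ _ hj) hj))
    have heq : p - (p + j) * c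
        = (p - p * ((p + j) * c)) + (p * ((p + j) * c) - (p + j) * c) := by abel
    rw [heq]
    exact J.add_mem hA hB
end

section
/- Let J be the ideal {f ∈ C([0,1]) : f(0) = f(1) = 0} of C([0,1]), and let a ∈ C([0,1]) with a(0) = 0 and a(1) = 1. Then a + J is a projection in C([0,1])/J (in particular Moore-Penrose invertible), but the coset a + J contains neither a Moore-Penrose invertible function nor a projection of C([0,1]). -/
open unitInterval

lemma aux_ivt_abs (f : C(unitInterval, ℂ)) (hf0 : f 0 = 0) (hf1 : f 1 = 1)
    {ε : ℝ} (hε0 : 0 ≤ ε) (hε1 : ε ≤ 1) : ∃ t, ‖f t‖ = ε := by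
  have hc : Continuous fun t => ‖f t‖ :=
    continuous_norm.comp f.continuous
  have h := intermediate_value_univ (0 : unitInterval) 1 hc
  have hmem : ε ∈ Set.Icc ‖f 0‖ ‖f 1‖ := by
    simp [hf0, hf1, hε0, hε1]
  exact h hmem

/-- Let `J = {f ∈ C([0,1]) : f 0 = f 1 = 0}` and `a ∈ C([0,1])` with `a 0 = 0`,
`a 1 = 1`. Then `a + J` is a projection (hence Moore-Penrose invertible) in the
quotient, but `a + J` contains neither a Moore-Penrose invertible function nor
a projection. -/
theorem projection_coset_without_lift
    (a : C(unitInterval, ℂ)) (h0 : a 0 = 0) (h1 : a 1 = 1) :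
    ((star a - a) 0 = 0 ∧ (star a - a) 1 = 0) ∧
    ((a * a - a) 0 = 0 ∧ (a * a - a) 1 = 0) ∧
    (∃ b : C(unitInterval, ℂ),
      ((a * b * a - a) 0 = 0 ∧ (a * b * a - a) 1 = 0) ∧
      ((b * a * b - b) 0 = 0 ∧ (b * a * b - b) 1 = 0) ∧
      ((star (a * b) - a * b) 0 = 0 ∧ (star (a * b) - a * b) 1 = 0) ∧
      ((star (b * a) - b * a) 0 = 0 ∧ (star (b * a) - b * a) 1 = 0)) ∧
    (¬ ∃ f : C(unitInterval, ℂ), ((a - f) 0 = 0 ∧ (a - f) 1 = 0) ∧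
      ∃ g : C(unitInterval, ℂ), f * g * f = f ∧ g * f * g = g ∧
        star (f * g) = f * g ∧ star (g * f) = g * f) ∧
    (¬ ∃ q : C(unitInterval, ℂ), (star q = q ∧ q * q = q) ∧
      ((a - q) 0 = 0 ∧ (a - q) 1 = 0)) := by
  refine ⟨⟨by simp [h0], by simp [h1]⟩, ⟨by simp [h0], by simp [h1]⟩,
    ⟨a, ⟨by simp [h0], by simp [h1]⟩, ⟨by simp [h0], by simp [h1]⟩,
      ⟨by simp [h0], by simp [h1]⟩, ⟨by simp [h0], by simp [h1]⟩⟩, ?_, ?_⟩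
  · rintro ⟨f, ⟨hf0, hf1⟩, g, hfgf, -, -, -⟩
    have hf0' : f 0 = 0 := by
      have := hf0; rw [ContinuousMap.sub_apply, sub_eq_zero] at this
      rw [← this, h0]
    have hf1' : f 1 = 1 := by
      have := hf1; rw [ContinuousMap.sub_apply, sub_eq_zero] at this
      rw [← this, h1]
    have hgpos : (0:ℝ) < ‖g‖ + 1 := by positivity
    set ε : ℝ := min (1/2) (1/(2*(‖g‖+1))) with hεdef
    have hεpos : 0 < ε := by positivity
    obtain ⟨t, ht⟩ := aux_ivt_abs f hf0' hf1' hεpos.le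
      (le_trans (min_le_left _ _) (by norm_num))
    have hftne : f t ≠ 0 := by
      intro h; rw [h] at ht; simp at ht; exact hεpos.ne ht
    have happ : f t * g t * f t = f t := by
      have := congrArg (fun h : C(unitInterval, ℂ) => h t) hfgf
      simpa using this
    have hgt : f t * g t = 1 := by
      have : (f t * g t) * f t = 1 * f t := by rw [happ, one_mul]
      exact mul_right_cancel₀ hftne this
    have habs : ‖f t‖ * ‖g t‖ = 1 := by
      rw [← norm_mul, hgt, norm_one]
    have hgle : ‖g t‖ ≤ ‖g‖ := by
      simpa using g.norm_coe_le_norm t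
    have hgnn : (0:ℝ) ≤ ‖g t‖ := norm_nonneg _
    have hεle : ε ≤ 1/(2*(‖g‖+1)) := min_le_right _ _
    rw [ht] at habs
    have h2 : ε * ‖g t‖ ≤ 1/(2*(‖g‖+1)) * ‖g‖ :=
      mul_le_mul hεle hgle hgnn (by positivity)
    rw [habs, div_mul_eq_mul_div, one_mul, le_div_iff₀ (by positivity)] at h2
    linarith [norm_nonneg g]
  · rintro ⟨q, ⟨-, hidem⟩, hq0, hq1⟩
    have hq0' : q 0 = 0 := by
      have := hq0; rw [ContinuousMap.sub_apply, sub_eq_zero] at this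
      rw [← this, h0]
    have hq1' : q 1 = 1 := by
      have := hq1; rw [ContinuousMap.sub_apply, sub_eq_zero] at this
      rw [← this, h1]
    obtain ⟨t, ht⟩ := aux_ivt_abs q hq0' hq1' (by norm_num : (0:ℝ) ≤ 1/2) (by norm_num)
    have happ : q t * q t = q t := by
      have := congrArg (fun h : C(unitInterval, ℂ) => h t) hidem
      simpa using this
    have : q t = 0 ∨ q t = 1 := by
      rcases mul_eq_zero.mp (by ring_nf; linear_combination happ : q t * (q t - 1) = 0) with h | h
      · exact Or.inl h
      · exact Or.inr (by linear_combination h)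
    rcases this with h | h <;> rw [h] at ht <;> simp at ht
end

section
/- Let A = C(D̄) where D̄ is the closed unit disk, and J = {f ∈ C(D̄) : f vanishes on the unit circle T}. Then the coset of the function a(z) = z is invertible in A/J, but there is no Moore-Penrose invertible function ã ∈ C(D̄) with a − ã ∈ J. Hence J does not lift Moore-Penrose invertible elements. -/
open Complex Metric Set Real Finset

set_option maxHeartbeats 1000000

noncomputable section

private def clamp01 (s : ℝ) : ℝ := min (max s 0) 1

private lemma clamp01_mem (s : ℝ) : clamp01 s ∈ Set.Icc (0:ℝ) 1 := by
  constructor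
  · exact le_min (le_max_right _ _) zero_le_one
  · exact min_le_right _ _

private lemma clamp01_idem (s : ℝ) : clamp01 (clamp01 s) = clamp01 s := by
  have h := clamp01_mem s
  show min (max (clamp01 s) 0) 1 = clamp01 s
  rw [max_eq_left h.1, min_eq_left h.2]

private lemma clamp01_zero : clamp01 0 = 0 := by norm_num [clamp01]
private lemma clamp01_one : clamp01 1 = 1 := by norm_num [clamp01]

private lemma norm_exp_mul_I (θ : ℝ) : ‖Complex.exp (θ * Complex.I)‖ = 1 := by
  rw [Complex.norm_exp]
  simp

private lemma pt_mem (s θ : ℝ) :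
    ((clamp01 s : ℝ) : ℂ) * Complex.exp (θ * Complex.I) ∈ Metric.closedBall (0:ℂ) 1 := by
  rw [Metric.mem_closedBall, dist_zero_right, norm_mul, norm_exp_mul_I, mul_one,
    Complex.norm_real, Real.norm_eq_abs, _root_.abs_of_nonneg (clamp01_mem s).1]
  exact (clamp01_mem s).2

/-- There is no continuous nonvanishing function on the closed disk agreeing with `z` on
the boundary circle. -/
private lemma no_retraction (f : C((Metric.closedBall (0 : ℂ) 1 : Set ℂ), ℂ))
    (hne : ∀ z, f z ≠ 0)
    (hbd : ∀ z : (Metric.closedBall (0 : ℂ) 1 : Set ℂ), ‖(z : ℂ)‖ = 1 → f z = (z : ℂ)) :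
    False := by
  classical
  set G : ℝ × ℝ → ℂ := fun p => f ⟨((clamp01 p.1 : ℝ) : ℂ) * Complex.exp (p.2 * Complex.I),
    pt_mem p.1 p.2⟩ with hGdef
  have hCc : Continuous clamp01 := (continuous_id.max continuous_const).min continuous_const
  have hGcont : Continuous G := by
    apply f.continuous.comp
    apply Continuous.subtype_mk
    exact ((Complex.continuous_ofReal.comp (hCc.comp continuous_fst)).mul
      (Complex.continuous_exp.comp ((Complex.continuous_ofReal.comp continuous_snd).mul
        continuous_const)))
  have hg : ∀ p, G p ≠ 0 := fun p => hne _
  have hGc : ∀ s θ', G (s, θ') = G (clamp01 s, θ') := by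
    intro s θ'
    simp only [hGdef]
    congr 1
    exact Subtype.ext (by simp [clamp01_idem])
  -- compact set and minimum of ‖G‖
  set K : Set (ℝ × ℝ) := Set.Icc (0:ℝ) 1 ×ˢ Set.Icc (0:ℝ) (2*π) with hKdef
  have hKcomp : IsCompact K := isCompact_Icc.prod isCompact_Icc
  have hKne : K.Nonempty := ⟨(0,0), ⟨by norm_num, by constructor <;> [norm_num; positivity]⟩⟩
  obtain ⟨p₀, hp₀K, hp₀⟩ := hKcomp.exists_isMinOn hKne (hGcont.norm.continuousOn)
  set m : ℝ := ‖G p₀‖ with hmdef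
  have hm : 0 < m := norm_pos_iff.2 (hg p₀)
  have hmin : ∀ p ∈ K, m ≤ ‖G p‖ := fun p hp => hp₀ hp
  -- uniform continuity
  have hUC : UniformContinuousOn G K :=
    hKcomp.uniformContinuousOn_of_continuous hGcont.continuousOn
  rw [Metric.uniformContinuousOn_iff] at hUC
  obtain ⟨δ, hδ, hδ'⟩ := hUC m hm
  -- choose n
  obtain ⟨n, hn⟩ := exists_nat_gt (2 * π / min δ π)
  have hd : 0 < min δ π := lt_min hδ pi_pos
  have h2π : (0:ℝ) < 2 * π := by positivity
  have hn0 : 0 < (n:ℝ) := lt_trans (by positivity) hn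
  have hnn : n ≠ 0 := by exact_mod_cast hn0.ne'
  have hstep : 2 * π / n < min δ π := by
    rw [div_lt_iff₀ hn0]
    calc 2 * π = (2 * π / min δ π) * min δ π := by field_simp
    _ < n * min δ π := by apply mul_lt_mul_of_pos_right hn hd
    _ ≤ min δ π * n := by ring_nf; rfl
  have hstepδ : 2 * π / n < δ := lt_of_lt_of_le hstep (min_le_left _ _)
  have hstepπ : 2 * π / n < π := lt_of_lt_of_le hstep (min_le_right _ _)
  have hsteppos : 0 < 2 * π / n := by positivity
  -- grid points
  set θ : ℕ → ℝ := fun k => 2 * π * k / n with hθdef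
  have hθmem : ∀ k ≤ n, θ k ∈ Set.Icc (0:ℝ) (2*π) := by
    intro k hk
    constructor
    · positivity
    · rw [div_le_iff₀ hn0]
      have : (k:ℝ) ≤ n := by exact_mod_cast hk
      nlinarith
  have hθdiff : ∀ k : ℕ, θ (k+1) - θ k = 2 * π / n := by
    intro k
    simp only [hθdef]
    push_cast
    field_simp
    ring
  have hθ0 : θ 0 = 0 := by simp [hθdef]
  have hθn : θ n = 2 * π := by
    simp only [hθdef]
    field_simp
  -- key estimates
  have key : ∀ (s : ℝ), ∀ k < n,
      ‖G (s, θ (k+1)) - G (s, θ k)‖ < m ∧ m ≤ ‖G (s, θ k)‖ := by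
    intro s k hk
    have h1 : (clamp01 s, θ k) ∈ K := ⟨clamp01_mem s, hθmem k hk.le⟩
    have h2 : (clamp01 s, θ (k+1)) ∈ K := ⟨clamp01_mem s, hθmem (k+1) hk⟩
    have hdist : dist ((clamp01 s, θ (k+1)) : ℝ × ℝ) (clamp01 s, θ k) < δ := by
      rw [Prod.dist_eq]
      apply max_lt (by simpa using hδ)
      rw [Real.dist_eq, hθdiff k, abs_of_pos hsteppos]
      exact hstepδ
    have := hδ' _ h2 _ h1 hdist
    rw [dist_eq_norm] at this
    rw [hGc s (θ (k+1)), hGc s (θ k)]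
    exact ⟨this, hmin _ h1⟩
  -- ratios lie in the slit plane
  have hratio : ∀ (s : ℝ), ∀ k < n,
      0 < (G (s, θ (k+1)) / G (s, θ k)).re := by
    intro s k hk
    obtain ⟨h1, h2⟩ := key s k hk
    set x := G (s, θ (k+1))
    set y := G (s, θ k)
    have hy : y ≠ 0 := hg _
    have hy' : 0 < ‖y‖ := norm_pos_iff.2 hy
    have hlt : ‖x / y - 1‖ < 1 := by
      rw [div_sub_one hy, norm_div, div_lt_one hy']
      exact lt_of_lt_of_le h1 h2
    have habs : |(x / y - 1).re| ≤ ‖x / y - 1‖ := Complex.abs_re_le_norm _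
    have : (x / y - 1).re = (x / y).re - 1 := by simp [Complex.sub_re]
    nlinarith [abs_le.1 habs]
  have hslit : ∀ (s : ℝ), ∀ k < n,
      G (s, θ (k+1)) / G (s, θ k) ∈ Complex.slitPlane := by
    intro s k hk
    exact Complex.mem_slitPlane_iff.2 (Or.inl (hratio s k hk))
  -- the "winding" function
  set L : ℝ → ℂ := fun s => ∑ k ∈ Finset.range n,
    Complex.log (G (s, θ (k+1)) / G (s, θ k)) with hLdef
  have hLcont : Continuous L := by
    apply continuous_finset_sum
    intro k hk
    rw [Finset.mem_range] at hk
    rw [continuous_iff_continuousAt]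
    intro s
    have hGk : ∀ j, ContinuousAt (fun s : ℝ => G (s, θ j)) s :=
      fun j => (hGcont.comp (continuous_id.prodMk continuous_const)).continuousAt
    exact ContinuousAt.clog ((hGk (k+1)).div (hGk k) (hg _)) (hslit s k hk)
  -- L takes values in 2πiℤ
  have hint : ∀ s : ℝ, ∃ j : ℤ, L s = j * (2 * π * Complex.I) := by
    intro s
    rw [← Complex.exp_eq_one_iff]
    rw [hLdef]
    simp only
    rw [Complex.exp_sum]
    have : ∀ k ∈ Finset.range n, Complex.exp (Complex.log (G (s, θ (k+1)) / G (s, θ k)))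
        = G (s, θ (k+1)) / G (s, θ k) := by
      intro k _
      exact Complex.exp_log (div_ne_zero (hg _) (hg _))
    rw [Finset.prod_congr rfl this]
    have htel : ∀ N : ℕ, (∏ k ∈ Finset.range N, (G (s, θ (k+1)) / G (s, θ k)))
        = G (s, θ N) / G (s, θ 0) := by
      intro N
      induction N with
      | zero => simp [div_self (hg (s, θ 0))]
      | succ N ih =>
        rw [Finset.prod_range_succ, ih, div_mul_div_comm]
        rw [mul_comm (G (s, θ N))]
        rw [mul_div_mul_right _ _ (hg (s, θ N))]
    rw [htel n]
    have h2 : G (s, θ n) = G (s, θ 0) := by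
      simp only [hGdef]
      congr 1
      apply Subtype.ext
      simp only [hθn, hθ0]
      push_cast
      rw [Complex.exp_two_pi_mul_I]
      simp
    rw [h2, div_self (hg _)]
  -- values at 0 and 1
  have hL0 : L 0 = 0 := by
    rw [hLdef]
    apply Finset.sum_eq_zero
    intro k _
    have : G (0, θ (k+1)) = G (0, θ k) := by
      simp only [hGdef]
      congr 1
      apply Subtype.ext
      simp [clamp01_zero]
    rw [this, div_self (hg _), Complex.log_one]
  have hL1 : (L 1).im = 2 * π := by
    have hterm : ∀ k, Complex.log (G (1, θ (k+1)) / G (1, θ k))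
        = ((2 * π / n : ℝ) : ℂ) * Complex.I := by
      intro k
      have hGval : ∀ j : ℕ, G (1, θ j) = Complex.exp ((θ j : ℂ) * Complex.I) := by
        intro j
        simp only [hGdef]
        have hnorm : ‖((clamp01 1 : ℝ) : ℂ) * Complex.exp ((θ j : ℂ) * Complex.I)‖ = 1 := by
          rw [clamp01_one]
          push_cast
          rw [one_mul]
          exact norm_exp_mul_I (θ j)
        refine (hbd ⟨_, pt_mem 1 (θ j)⟩ hnorm).trans ?_
        show ((clamp01 1 : ℝ) : ℂ) * _ = _
        rw [clamp01_one]
        push_cast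
        rw [one_mul]
      rw [hGval (k+1), hGval k, ← Complex.exp_sub]
      have harg : (θ (k+1) : ℂ) * Complex.I - (θ k : ℂ) * Complex.I
          = ((2 * π / n : ℝ) : ℂ) * Complex.I := by
        rw [← sub_mul, ← Complex.ofReal_sub, hθdiff k]
      rw [harg]
      apply Complex.log_exp
      · simp only [Complex.mul_im, Complex.ofReal_re, Complex.I_im, Complex.ofReal_im,
          Complex.I_re, mul_zero, mul_one, zero_mul, add_zero]
        linarith
      · simp only [Complex.mul_im, Complex.ofReal_re, Complex.I_im, Complex.ofReal_im,
          Complex.I_re, mul_zero, mul_one, zero_mul, add_zero]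
        linarith
    rw [hLdef]
    simp only
    rw [Finset.sum_congr rfl (fun k _ => hterm k), Finset.sum_const, Finset.card_range,
      nsmul_eq_mul]
    simp only [Complex.mul_im, Complex.mul_re, Complex.natCast_re,
      Complex.ofReal_re, Complex.natCast_im, Complex.ofReal_im, Complex.I_re, Complex.I_im,
      mul_zero, mul_one, zero_mul, add_zero, sub_zero, zero_add]
    field_simp
  -- intermediate value argument
  set u : ℝ → ℝ := fun s => (L s).im with hudef
  have hucont : Continuous u := Complex.continuous_im.comp hLcont
  have hu0 : u 0 = 0 := by simp only [hudef, hL0, Complex.zero_im]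
  have hu1 : u 1 = 2 * π := hL1
  have hπmem : π ∈ Set.Icc (u 0) (u 1) := by
    rw [hu0, hu1]
    constructor
    · exact pi_pos.le
    · linarith [pi_pos]
  obtain ⟨s, _, hs⟩ := intermediate_value_Icc (by norm_num : (0:ℝ) ≤ 1)
    hucont.continuousOn hπmem
  obtain ⟨j, hj⟩ := hint s
  have him : u s = j * (2 * π) := by
    show (L s).im = _
    rw [hj]
    simp
  rw [hs] at him
  have h2j : (2 * j : ℝ) = 1 := by
    nlinarith [pi_pos, sq_nonneg ((j:ℝ)*2 - 1), him]
  have : (2 * j : ℤ) = 1 := by exact_mod_cast h2j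
  omega

end

section Main

private lemma seg_mem (z : ℂ) (hz : z ∈ Metric.closedBall (0:ℂ) 1) (t : ℝ) :
    ((1 - clamp01 t : ℝ) : ℂ) * z + ((clamp01 t : ℝ) : ℂ) ∈ Metric.closedBall (0:ℂ) 1 := by
  obtain ⟨h0, h1⟩ := clamp01_mem t
  rw [Metric.mem_closedBall, dist_zero_right]
  have hz' : ‖z‖ ≤ 1 := by rwa [Metric.mem_closedBall, dist_zero_right] at hz
  calc ‖((1 - clamp01 t : ℝ) : ℂ) * z + ((clamp01 t : ℝ) : ℂ)‖
      ≤ ‖((1 - clamp01 t : ℝ) : ℂ) * z‖ + ‖((clamp01 t : ℝ) : ℂ)‖ := norm_add_le _ _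
    _ = (1 - clamp01 t) * ‖z‖ + clamp01 t := by
        rw [norm_mul, Complex.norm_real, Complex.norm_real, Real.norm_eq_abs,
          Real.norm_eq_abs, _root_.abs_of_nonneg (by linarith), _root_.abs_of_nonneg h0]
    _ ≤ (1 - clamp01 t) * 1 + clamp01 t := by nlinarith
    _ = 1 := by ring

private theorem disk_aux
    (a : C((Metric.closedBall (0 : ℂ) 1 : Set ℂ), ℂ))
    (ha : ∀ z : (Metric.closedBall (0 : ℂ) 1 : Set ℂ), a z = (z : ℂ)) :
    (∃ b : C((Metric.closedBall (0 : ℂ) 1 : Set ℂ), ℂ),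
      (∀ z : (Metric.closedBall (0 : ℂ) 1 : Set ℂ), ‖(z : ℂ)‖ = 1 → (a * b - 1) z = 0) ∧
      (∀ z : (Metric.closedBall (0 : ℂ) 1 : Set ℂ), ‖(z : ℂ)‖ = 1 → (b * a - 1) z = 0)) ∧
    ¬ ∃ f : C((Metric.closedBall (0 : ℂ) 1 : Set ℂ), ℂ),
      (∀ z : (Metric.closedBall (0 : ℂ) 1 : Set ℂ), ‖(z : ℂ)‖ = 1 → (a - f) z = 0) ∧
      ∃ g : C((Metric.closedBall (0 : ℂ) 1 : Set ℂ), ℂ),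
        f * g * f = f ∧ g * f * g = g ∧ star (f * g) = f * g ∧ star (g * f) = g * f := by
  constructor
  · refine ⟨star a, ?_, ?_⟩
    · intro z hz
      have : (z : ℂ) * (starRingEnd ℂ) (z : ℂ) = 1 := by
        rw [Complex.mul_conj]
        norm_cast
        rw [Complex.normSq_eq_norm_sq, hz]
        norm_num
      simp [ContinuousMap.sub_apply, ContinuousMap.mul_apply, ha z, this]
    · intro z hz
      have : (starRingEnd ℂ) (z : ℂ) * (z : ℂ) = 1 := by
        rw [mul_comm, Complex.mul_conj]
        norm_cast
        rw [Complex.normSq_eq_norm_sq, hz]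
        norm_num
      simp [ContinuousMap.sub_apply, ContinuousMap.mul_apply, ha z, this]
  · rintro ⟨f, hfa, g, hfgf, _, _, _⟩
    have hbd : ∀ z : (Metric.closedBall (0 : ℂ) 1 : Set ℂ), ‖(z : ℂ)‖ = 1 → f z = (z : ℂ) := by
      intro z hz
      have h := hfa z hz
      rw [ContinuousMap.sub_apply, sub_eq_zero] at h
      rw [← h, ha z]
    have hFGF : ∀ z, f z * g z * f z = f z := by
      intro z
      have := DFunLike.congr_fun hfgf z
      simpa [ContinuousMap.mul_apply] using this
    have hpt : ∀ z, f z * g z = 0 ∨ f z * g z = 1 := by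
      intro z
      have h : (f z * g z) * (f z * g z - 1) = 0 := by
        linear_combination (hFGF z) * g z
      rcases mul_eq_zero.1 h with h' | h'
      · exact Or.inl h'
      · exact Or.inr (sub_eq_zero.1 h')
    have hone : (1:ℂ) ∈ Metric.closedBall (0:ℂ) 1 := by
      rw [Metric.mem_closedBall, dist_zero_right]
      norm_num
    set one1 : (Metric.closedBall (0 : ℂ) 1 : Set ℂ) := ⟨1, hone⟩ with hone1
    have hf1 : f one1 = 1 := by
      rw [hbd one1 (by norm_num)]
    have hp1 : f one1 * g one1 = 1 := by
      have := hFGF one1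
      rw [hf1] at this
      rw [hf1]
      linear_combination this
    -- every value of f*g is 1, by connectedness along segments
    have hall : ∀ z, f z * g z = 1 := by
      intro z
      by_contra hcon
      have hz0 : f z * g z = 0 := (hpt z).resolve_right hcon
      set pt : ℝ → (Metric.closedBall (0 : ℂ) 1 : Set ℂ) := fun t =>
        ⟨((1 - clamp01 t : ℝ) : ℂ) * (z : ℂ) + ((clamp01 t : ℝ) : ℂ), seg_mem _ z.2 t⟩ with hptdef
      have hptc : Continuous pt := by
        apply Continuous.subtype_mk
        have hCc : Continuous clamp01 := (continuous_id.max continuous_const).min continuous_const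
        exact ((Complex.continuous_ofReal.comp (continuous_const.sub hCc)).mul
          continuous_const).add (Complex.continuous_ofReal.comp hCc)
      set q : ℝ → ℝ := fun t => (f (pt t) * g (pt t)).re with hqdef
      have hqc : Continuous q :=
        Complex.continuous_re.comp (((f.continuous.comp hptc)).mul (g.continuous.comp hptc))
      have hq0 : q 0 = 0 := by
        have : pt 0 = z := by
          apply Subtype.ext
          simp [hptdef, clamp01_zero]
        simp only [hqdef, this, hz0, Complex.zero_re]
      have hq1 : q 1 = 1 := by
        have : pt 1 = one1 := by
          apply Subtype.ext
          simp [hptdef, clamp01_one, hone1]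
        simp only [hqdef, this, hp1, Complex.one_re]
      have hmem : (1/2 : ℝ) ∈ Set.Icc (q 0) (q 1) := by
        rw [hq0, hq1]
        constructor <;> norm_num
      obtain ⟨t, _, ht⟩ := intermediate_value_Icc (by norm_num : (0:ℝ) ≤ 1)
        hqc.continuousOn hmem
      rcases hpt (pt t) with h' | h' <;>
        · rw [hqdef] at ht
          simp only [h'] at ht
          norm_num at ht
    have hfz : ∀ z, f z ≠ 0 := fun z => left_ne_zero_of_mul_eq_one (hall z)
    exact no_retraction f hfz hbd


end Main

/-- Let `A = C(D̄)` with `D̄` the closed unit disk and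
`J = {f ∈ C(D̄) : f` vanishes on the unit circle `}`. The coset of `a(z) = z` is
invertible in `A/J`, but no Moore-Penrose invertible function agrees with `a`
modulo `J`; hence `J` does not lift Moore-Penrose invertible elements. -/
theorem disk_ideal_does_not_lift_moore_penrose
    (a : C((Metric.closedBall (0 : ℂ) 1 : Set ℂ), ℂ))
    (ha : ∀ z : (Metric.closedBall (0 : ℂ) 1 : Set ℂ), a z = (z : ℂ)) :
    (∃ b : C((Metric.closedBall (0 : ℂ) 1 : Set ℂ), ℂ),
      (∀ z : (Metric.closedBall (0 : ℂ) 1 : Set ℂ), ‖(z : ℂ)‖ = 1 → (a * b - 1) z = 0) ∧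
      (∀ z : (Metric.closedBall (0 : ℂ) 1 : Set ℂ), ‖(z : ℂ)‖ = 1 → (b * a - 1) z = 0)) ∧
    ¬ ∃ f : C((Metric.closedBall (0 : ℂ) 1 : Set ℂ), ℂ),
      (∀ z : (Metric.closedBall (0 : ℂ) 1 : Set ℂ), ‖(z : ℂ)‖ = 1 → (a - f) z = 0) ∧
      ∃ g : C((Metric.closedBall (0 : ℂ) 1 : Set ℂ), ℂ),
        f * g * f = f ∧ g * f * g = g ∧ star (f * g) = f * g ∧ star (g * f) = g * f := by
  exact disk_aux a ha
end
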